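/- arXiv:2508.06935 — 4 statements merged into one kernel-verified Lean document; each statement's English description precedes it below -/
import Mathlib

section
/- Let ℋ = (𝒰, ℱ, 𝒰*) be a history graph for (o,T) for the j-threshold Consensus Process. Then, as an inequality of real numbers, (Φ_V(G) − j)·|𝒰| + 1 ≤ (Φ_V(G) − j + 1)·|𝒰*|. -/
open Classical
noncomputable section

namespace Paper

variable {V : Type*}

/-- Number of neighbours of `x` whose value is `1` (`true`). -/
def cCount (G : SimpleGraph V) [DecidableRel G.Adj] [∀ v, Fintype (G.neighborSet v)]
    (η : V → Bool) (x : V) : ℕ :=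
  ((G.neighborFinset x).filter fun y => η y = true).card

/-- The `j`-neighbour Bootstrap Percolation with noise set `N` and initial configuration `ξ`. -/
noncomputable def bootstrapPerc (G : SimpleGraph V) [DecidableRel G.Adj]
    [∀ v, Fintype (G.neighborSet v)] (j : ℕ) (N : Set (V × ℕ)) (ξ : V → Bool) :
    ℕ → V → Bool
  | 0 => ξ
  | t + 1 => fun x =>
      if (x, t + 1) ∈ N then false
      else bootstrapPerc G j N ξ t x || decide (j ≤ cCount G (bootstrapPerc G j N ξ t) x)

/-- The `j`-threshold Consensus Process with noise set `N` and initial configuration `ξ`. -/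
noncomputable def consensus (G : SimpleGraph V) [DecidableRel G.Adj]
    [∀ v, Fintype (G.neighborSet v)] (j : ℕ) (N : Set (V × ℕ)) (ξ : V → Bool) :
    ℕ → V → Bool
  | 0 => ξ
  | t + 1 => fun x =>
      if (x, t + 1) ∈ N then false
      else decide (j ≤ cCount G (consensus G j N ξ t) x)

/-- `∂_E K`: number of edges with exactly one endpoint in `K`. -/
def edgeBoundaryCard (G : SimpleGraph V) [DecidableRel G.Adj]
    [∀ v, Fintype (G.neighborSet v)] (K : Finset V) : ℕ :=
  ∑ x ∈ K, ((G.neighborFinset x).filter fun y => y ∉ K).card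

/-- The edge expansion constant `Φ_E(G)`. -/
noncomputable def edgeExpansion (G : SimpleGraph V) [DecidableRel G.Adj]
    [∀ v, Fintype (G.neighborSet v)] : ℝ :=
  sInf {r : ℝ | ∃ K : Finset V, K.Nonempty ∧ r = (edgeBoundaryCard G K : ℝ) / (K.card : ℝ)}

/-- `∂_V K`: number of vertices outside `K` adjacent to a vertex of `K`. -/
def vertexBoundaryCard [DecidableEq V] (G : SimpleGraph V) [DecidableRel G.Adj]
    [∀ v, Fintype (G.neighborSet v)] (K : Finset V) : ℕ :=
  ((K.biUnion fun x => G.neighborFinset x) \ K).card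

/-- The vertex expansion constant `Φ_V(G)`. -/
noncomputable def vertexExpansion [DecidableEq V] (G : SimpleGraph V) [DecidableRel G.Adj]
    [∀ v, Fintype (G.neighborSet v)] : ℝ :=
  sInf {r : ℝ | ∃ K : Finset V, K.Nonempty ∧ r = (vertexBoundaryCard G K : ℝ) / (K.card : ℝ)}

/-- A history graph `(𝒰, ℱ, 𝒰*)` for `(o, T)`.  If `bp = true` it is a history graph for the
`j`-neighbour Bootstrap Percolation (one outgoing straight edge and `deg x − j + 1` outgoing
oblique edges at every vertex of `𝒰 \ 𝒰*`); if `bp = false` it is a history graph for the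
`j`-threshold Consensus Process (no straight edges and `deg x − j + 1` outgoing oblique edges). -/
structure HistoryGraph (G : SimpleGraph V) [DecidableRel G.Adj]
    [∀ v, Fintype (G.neighborSet v)] (j : ℕ) (o : V) (T : ℕ) (bp : Bool) where
  U : Finset (V × ℕ)
  F : Finset ((V × ℕ) × (V × ℕ))
  Ustar : Finset (V × ℕ)
  ustar_subset : Ustar ⊆ U
  edge_mem_fst : ∀ e ∈ F, e.1 ∈ U
  edge_mem_snd : ∀ e ∈ F, e.2 ∈ U
  edge_time : ∀ e ∈ F, e.1.2 = e.2.2 + 1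
  edge_space : ∀ e ∈ F, e.1.1 = e.2.1 ∨ G.Adj e.1.1 e.2.1
  conn : ∀ u ∈ U, ∀ v ∈ U,
    Relation.ReflTransGen (fun a b => (a, b) ∈ F ∨ (b, a) ∈ F) u v
  root_mem : (o, T) ∈ U
  time_range : ∀ u ∈ U, u ≠ (o, T) → 1 ≤ u.2 ∧ u.2 ≤ T
  time_one_star : ∀ u ∈ U, u.2 = 1 → u ∈ Ustar
  star_no_out : ∀ u ∈ Ustar, ∀ e ∈ F, e.1 ≠ u
  straight_count : ∀ u ∈ U, u ∉ Ustar →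
      (F.filter fun e => e.1 = u ∧ e.2.1 = u.1).card = cond bp 1 0
  oblique_count : ∀ u ∈ U, u ∉ Ustar →
      (F.filter fun e => e.1 = u ∧ e.2.1 ≠ u.1).card = G.degree u.1 + 1 - j

/-- The strong product `G ⊠ ℕ`. -/
def strongProd (G : SimpleGraph V) : SimpleGraph (V × ℕ) where
  Adj p q := p ≠ q ∧ (p.2 ≤ q.2 + 1 ∧ q.2 ≤ p.2 + 1) ∧ (p.1 = q.1 ∨ G.Adj p.1 q.1)
  symm := by
    constructor
    rintro p q ⟨h1, ⟨h2, h3⟩, h4⟩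
    exact ⟨h1.symm, ⟨h3, h2⟩, h4.elim (fun e => Or.inl e.symm) fun a => Or.inr a.symm⟩
  loopless := ⟨fun p h => h.1 rfl⟩

/-- The connected component of `p` in the subgraph of `G ⊠ ℕ` induced by `Z`. -/
def cluster (G : SimpleGraph V) (Z : Set (V × ℕ)) (p : V × ℕ) : Set (V × ℕ) :=
  {q | p ∈ Z ∧ q ∈ Z ∧
    Relation.ReflTransGen (fun a b => a ∈ Z ∧ b ∈ Z ∧ (strongProd G).Adj a b) p q}

/-- The witness-root property defining `j ≤ j̄`. -/
def radialGood (G : SimpleGraph V) [DecidableRel G.Adj] [∀ v, Fintype (G.neighborSet v)]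
    (j : ℕ) : Prop :=
  ∃ r : V, ∀ x : V,
    j ≤ ((G.neighborFinset x).filter fun y => G.dist r y = G.dist r x + 1).card

end Paper

section Aux

open Paper Finset

variable {V : Type*} [DecidableEq V] (G : SimpleGraph V)
    [DecidableRel G.Adj] [∀ v, Fintype (G.neighborSet v)]

private lemma vertexExpansion_mul_le (K : Finset V) (hK : K.Nonempty) :
    vertexExpansion G * K.card ≤ (vertexBoundaryCard G K : ℝ) := by
  have hbd : ∀ r ∈ {r : ℝ | ∃ K : Finset V, K.Nonempty ∧
      r = (vertexBoundaryCard G K : ℝ) / (K.card : ℝ)}, (0:ℝ) ≤ r := by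
    rintro r ⟨K, hK, rfl⟩; positivity
  have hle : vertexExpansion G ≤ (vertexBoundaryCard G K : ℝ) / K.card :=
    csInf_le ⟨0, hbd⟩ ⟨K, hK, rfl⟩
  have hc : (0:ℝ) < (K.card : ℝ) := by exact_mod_cast hK.card_pos
  calc vertexExpansion G * K.card
      ≤ ((vertexBoundaryCard G K : ℝ) / K.card) * K.card :=
        mul_le_mul_of_nonneg_right hle hc.le
    _ = (vertexBoundaryCard G K : ℝ) := by field_simp

private lemma slice_claim {j : ℕ} (hj1 : 1 ≤ j) (hdeg : ∀ x : V, j ≤ G.degree x)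
    {o : V} {T : ℕ} (H : HistoryGraph G j o T false) (t : ℕ) :
    vertexExpansion G * (((H.U \ H.Ustar).filter fun u => u.2 = t).card : ℝ) ≤
      ((j:ℝ) - 1) * (((H.U \ H.Ustar).filter fun u => u.2 = t).card : ℝ)
      + (if t = 0 then 0 else (((H.U.filter fun u => u.2 = t - 1).card : ℝ))) := by
  classical
  set gt := (H.U \ H.Ustar).filter fun u => u.2 = t with hgt
  rcases gt.eq_empty_or_nonempty with he | ⟨u, hu⟩
  · rw [he]
    simp only [card_empty, Nat.cast_zero, mul_zero, zero_add]
    split_ifs <;> positivity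
  · obtain ⟨huD, hut⟩ := Finset.mem_filter.mp hu
    obtain ⟨huU, huS⟩ := Finset.mem_sdiff.mp huD
    -- t ≥ 1
    have hcard : 0 < (H.F.filter fun e => e.1 = u ∧ e.2.1 ≠ u.1).card := by
      have hcnt := H.oblique_count u huU huS
      have hcnt' : (H.F.filter fun e => e.1 = u ∧ e.2.1 ≠ u.1).card
          = G.degree u.1 + 1 - j := by convert hcnt using 2 <;> congr
      rw [hcnt']
      have := hdeg u.1; omega
    obtain ⟨e, he⟩ := Finset.card_pos.mp hcard
    obtain ⟨heF, heu, -⟩ := Finset.mem_filter.mp he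
    have ht1 : 1 ≤ t := by
      have h := H.edge_time e heF
      rw [heu] at h
      omega
    set K := ((H.U.filter fun u => u.2 = t - 1).image Prod.fst) with hK
    set A := gt.image Prod.fst with hA
    have hAcard : A.card = gt.card := by
      apply Finset.card_image_of_injOn
      intro a ha b hb hab
      have ha2 := (Finset.mem_filter.mp ha).2
      have hb2 := (Finset.mem_filter.mp hb).2
      exact Prod.ext_iff.mpr ⟨hab, by omega⟩
    have hAne : A.Nonempty := ⟨u.1, Finset.mem_image.mpr ⟨u, hu, rfl⟩⟩
    -- per-vertex bound
    have hvert : ∀ x ∈ A, ((G.neighborFinset x).filter fun y => y ∉ K).card ≤ j - 1 := by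
      intro x hxA
      obtain ⟨w, hw, hwx⟩ := Finset.mem_image.mp hxA
      obtain ⟨hwD, hwt⟩ := Finset.mem_filter.mp hw
      obtain ⟨hwU, hwS⟩ := Finset.mem_sdiff.mp hwD
      have hcnt := H.oblique_count w hwU hwS
      have hinj : (H.F.filter fun e => e.1 = w ∧ e.2.1 ≠ w.1).card ≤
          ((G.neighborFinset x).filter fun y => y ∈ K).card := by
        apply Finset.card_le_card_of_injOn (fun e => e.2.1)
        · intro e heF'
          obtain ⟨heF0, hew, hene⟩ := Finset.mem_filter.mp heF'
          have hadj : G.Adj x e.2.1 := by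
            rcases H.edge_space e heF0 with h | h
            · exact absurd (by rw [← h, hew]) hene
            · rw [hew] at h; rw [← hwx]; exact h
          have htime : e.2.2 = t - 1 := by
            have h := H.edge_time e heF0
            rw [hew] at h
            omega
          refine Finset.mem_filter.mpr ⟨G.mem_neighborFinset x e.2.1 |>.mpr hadj, ?_⟩
          exact Finset.mem_image.mpr ⟨e.2, Finset.mem_filter.mpr
            ⟨H.edge_mem_snd e heF0, htime⟩, rfl⟩
        · intro e heF' e' heF'' hee
          obtain ⟨heF0, hew, -⟩ := Finset.mem_filter.mp heF'
          obtain ⟨heF1, hew', -⟩ := Finset.mem_filter.mp heF''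
          have h1 := H.edge_time e heF0
          have h2 := H.edge_time e' heF1
          rw [hew] at h1; rw [hew'] at h2
          have h2eq : e.2 = e'.2 := Prod.ext_iff.mpr ⟨hee, by omega⟩
          exact Prod.ext_iff.mpr ⟨hew.trans hew'.symm, h2eq⟩
      have hcnt' : (H.F.filter fun e => e.1 = w ∧ e.2.1 ≠ w.1).card
          = G.degree w.1 + 1 - j := by convert hcnt using 2 <;> congr
      rw [hcnt', hwx] at hinj
      have hsplit := Finset.card_filter_add_card_filter_not
        (s := G.neighborFinset x) (p := fun y => y ∈ K)
      have hdx := hdeg x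
      have hcn : (G.neighborFinset x).card = G.degree x := rfl
      omega
    -- boundary bound
    have hbound : vertexBoundaryCard G A ≤ K.card + (j - 1) * A.card := by
      have hsubset : (A.biUnion fun x => G.neighborFinset x) \ A ⊆
          K ∪ A.biUnion (fun x => (G.neighborFinset x).filter fun y => y ∉ K) := by
        intro z hz
        obtain ⟨hzB, hzA⟩ := Finset.mem_sdiff.mp hz
        obtain ⟨x, hxA, hzN⟩ := Finset.mem_biUnion.mp hzB
        by_cases hzK : z ∈ K
        · exact Finset.mem_union_left _ hzK
        · exact Finset.mem_union_right _ (Finset.mem_biUnion.mpr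
            ⟨x, hxA, Finset.mem_filter.mpr ⟨hzN, hzK⟩⟩)
      calc vertexBoundaryCard G A
          ≤ (K ∪ A.biUnion (fun x => (G.neighborFinset x).filter fun y => y ∉ K)).card :=
            Finset.card_le_card hsubset
        _ ≤ K.card + (A.biUnion fun x => (G.neighborFinset x).filter fun y => y ∉ K).card :=
            Finset.card_union_le _ _
        _ ≤ K.card + ∑ x ∈ A, ((G.neighborFinset x).filter fun y => y ∉ K).card := by
            gcongr
            exact Finset.card_biUnion_le
        _ ≤ K.card + ∑ _x ∈ A, (j - 1) := by
            gcongr with x hx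
            exact hvert x hx
        _ = K.card + (j - 1) * A.card := by
            rw [Finset.sum_const, smul_eq_mul, mul_comm]
    have hexp := vertexExpansion_mul_le G A hAne
    have hKf : K.card ≤ (H.U.filter fun u => u.2 = t - 1).card := Finset.card_image_le
    have ht0 : t ≠ 0 := by omega
    rw [if_neg ht0]
    have hcast : ((K.card + (j - 1) * A.card : ℕ) : ℝ)
        = (K.card : ℝ) + ((j:ℝ) - 1) * (A.card : ℝ) := by
      push_cast [Nat.cast_sub hj1]
      ring
    have h1 : (vertexBoundaryCard G A : ℝ) ≤ (K.card : ℝ) + ((j:ℝ) - 1) * (A.card : ℝ) := by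
      rw [← hcast]; exact_mod_cast hbound
    have h2 : (K.card : ℝ) ≤ ((H.U.filter fun u => u.2 = t - 1).card : ℝ) := by
      exact_mod_cast hKf
    have h3 : (A.card : ℝ) = (gt.card : ℝ) := by exact_mod_cast hAcard
    calc vertexExpansion G * (gt.card : ℝ)
        = vertexExpansion G * (A.card : ℝ) := by rw [h3]
      _ ≤ (vertexBoundaryCard G A : ℝ) := hexp
      _ ≤ ((j:ℝ) - 1) * (gt.card : ℝ) + ((H.U.filter fun u => u.2 = t - 1).card : ℝ) := by
          rw [h3] at h1
          linarith

end Aux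

open Paper in
/-- the vertex-expansion history-graph inequality (Lemma 4.6) for the
`j`-threshold Consensus Process. -/
theorem historyGraph_vertex_expansion_inequality_CP
    {V : Type*} [Infinite V] [DecidableEq V]
    (G : SimpleGraph V) [DecidableRel G.Adj] [∀ v, Fintype (G.neighborSet v)]
    (hconn : G.Connected)
    (Δ : ℕ) (hΔ : IsLUB (Set.range fun x => G.degree x) Δ)
    (δ : ℕ) (hδ : IsGLB (Set.range fun x => G.degree x) δ)
    (j : ℕ) (hj1 : 1 ≤ j) (hjδ : j ≤ δ)
    (o : V) (T : ℕ) (H : HistoryGraph G j o T false) :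
    (vertexExpansion G - j) * H.U.card + 1 ≤ (vertexExpansion G - j + 1) * H.Ustar.card := by
  classical
  have hdeg : ∀ x : V, j ≤ G.degree x := fun x => hjδ.trans (hδ.1 ⟨x, rfl⟩)
  have hsub := H.ustar_subset
  have hsn : H.Ustar.card ≤ H.U.card := Finset.card_le_card hsub
  have hmemT : ∀ u ∈ H.U, u.2 ∈ Finset.range (T + 1) := by
    intro u hu
    rcases eq_or_ne u (o, T) with rfl | hne
    · simp
    · exact Finset.mem_range.mpr (Nat.lt_succ_of_le (H.time_range u hu hne).2)
  have hn_sum : ∑ t ∈ Finset.range (T + 1), (H.U.filter fun u => u.2 = t).card = H.U.card :=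
    (Finset.card_eq_sum_card_fiberwise hmemT).symm
  have ha_sum : ∑ t ∈ Finset.range (T + 1), ((H.U \ H.Ustar).filter fun u => u.2 = t).card
      = (H.U \ H.Ustar).card :=
    (Finset.card_eq_sum_card_fiberwise
      (fun u hu => hmemT u (Finset.mem_sdiff.mp hu).1)).symm
  have key := fun t => slice_claim G hj1 hdeg H t
  have hsum : vertexExpansion G *
      (∑ t ∈ Finset.range (T + 1), (((H.U \ H.Ustar).filter fun u => u.2 = t).card : ℝ))
      ≤ ((j:ℝ) - 1) *
        (∑ t ∈ Finset.range (T + 1), (((H.U \ H.Ustar).filter fun u => u.2 = t).card : ℝ))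
      + ∑ t ∈ Finset.range (T + 1),
          (if t = 0 then (0:ℝ) else (((H.U.filter fun u => u.2 = t - 1).card : ℝ))) := by
    rw [Finset.mul_sum, Finset.mul_sum, ← Finset.sum_add_distrib]
    exact Finset.sum_le_sum fun t _ => key t
  have hm : ∑ t ∈ Finset.range (T + 1),
        (if t = 0 then (0:ℝ) else (((H.U.filter fun u => u.2 = t - 1).card : ℝ)))
      = ∑ t ∈ Finset.range T, (((H.U.filter fun u => u.2 = t).card : ℝ)) := by
    rw [Finset.sum_range_succ']
    simp
  have hfT : 1 ≤ (H.U.filter fun u => u.2 = T).card :=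
    Finset.card_pos.mpr ⟨(o, T), Finset.mem_filter.mpr ⟨H.root_mem, rfl⟩⟩
  have hsplitn : ∑ t ∈ Finset.range T, (H.U.filter fun u => u.2 = t).card
      + (H.U.filter fun u => u.2 = T).card = H.U.card := by
    rw [← Finset.sum_range_succ]; exact hn_sum
  have hDn : ((H.U \ H.Ustar).card : ℝ) = (H.U.card : ℝ) - (H.Ustar.card : ℝ) := by
    rw [Finset.card_sdiff_of_subset hsub, Nat.cast_sub hsn]
  have hgsum : (∑ t ∈ Finset.range (T + 1),
      (((H.U \ H.Ustar).filter fun u => u.2 = t).card : ℝ))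
      = (H.U.card : ℝ) - (H.Ustar.card : ℝ) := by
    rw [← hDn, ← Nat.cast_sum]
    exact_mod_cast congrArg (Nat.cast : ℕ → ℝ) ha_sum
  have hnsum' : (∑ t ∈ Finset.range T, (((H.U.filter fun u => u.2 = t).card : ℝ)))
      ≤ (H.U.card : ℝ) - 1 := by
    have h1 : ((∑ t ∈ Finset.range T, (H.U.filter fun u => u.2 = t).card : ℕ) : ℝ)
        = ∑ t ∈ Finset.range T, (((H.U.filter fun u => u.2 = t).card : ℝ)) := by
      push_cast; ring
    rw [← h1]
    have h2 : ∑ t ∈ Finset.range T, (H.U.filter fun u => u.2 = t).card ≤ H.U.card - 1 := by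
      omega
    calc ((∑ t ∈ Finset.range T, (H.U.filter fun u => u.2 = t).card : ℕ) : ℝ)
        ≤ ((H.U.card - 1 : ℕ) : ℝ) := by exact_mod_cast h2
      _ ≤ (H.U.card : ℝ) - 1 := by
          have : 1 ≤ H.U.card := Finset.card_pos.mpr ⟨(o, T), H.root_mem⟩
          rw [Nat.cast_sub this]; simp
  rw [hgsum, hm] at hsum
  nlinarith [hsum, hnsum']
end
end

section
/- Let ℋ = (𝒰, ℱ, 𝒰*) be a history graph for (o,T) for the j-neighbour Bootstrap Percolation. Then, as an inequality of real numbers, (Φ_V(G) − j + 1)·|𝒰| + 1 ≤ (Φ_V(G) − j + 2)·|𝒰*|. -/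
open Classical
noncomputable section

private lemma prodext {α β : Type*} {p q : α × β} (h1 : p.1 = q.1) (h2 : p.2 = q.2) :
    p = q := by
  cases p; cases q; cases h1; cases h2; rfl

private lemma exists_mem_filter_of_card {α : Type*} {s : Finset α} {p : α → Prop}
    {inst : DecidablePred p} {n : ℕ} (hn : 0 < n)
    (h : (@Finset.filter α p inst s).card = n) : ∃ e ∈ s, p e := by
  letI := inst
  obtain ⟨e, he⟩ := Finset.card_pos.mp (lt_of_lt_of_eq hn h.symm)
  have h2 := Finset.mem_filter.mp he
  exact ⟨e, h2.1, h2.2⟩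

private lemma mem_filter' {α : Type*} {p : α → Prop} {inst : DecidablePred p}
    {s : Finset α} {a : α} (h : a ∈ @Finset.filter α p inst s) : a ∈ s ∧ p a :=
  (@Finset.mem_filter α p inst s a).mp h

private lemma phi_mul_card_le {V : Type*} [DecidableEq V] (G : SimpleGraph V)
    [DecidableRel G.Adj] [∀ v, Fintype (G.neighborSet v)]
    (A : Finset V) (hA : A.Nonempty) :
    Paper.vertexExpansion G * A.card ≤ (Paper.vertexBoundaryCard G A : ℝ) := by
  have hpos : (0:ℝ) < A.card := by
    have := Finset.card_pos.mpr hA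
    exact_mod_cast this
  have hmem : (Paper.vertexBoundaryCard G A : ℝ) / A.card ∈
      {r : ℝ | ∃ K : Finset V, K.Nonempty ∧
        r = (Paper.vertexBoundaryCard G K : ℝ) / (K.card : ℝ)} := ⟨A, hA, rfl⟩
  have hbdd : BddBelow {r : ℝ | ∃ K : Finset V, K.Nonempty ∧
      r = (Paper.vertexBoundaryCard G K : ℝ) / (K.card : ℝ)} := by
    refine ⟨0, ?_⟩
    rintro r ⟨K, hK, rfl⟩
    positivity
  have h := csInf_le hbdd hmem
  rw [Paper.vertexExpansion]
  exact (le_div_iff₀ hpos).1 h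

private lemma slice_ineq {V : Type*} [DecidableEq V] (G : SimpleGraph V)
    [DecidableRel G.Adj] [∀ v, Fintype (G.neighborSet v)]
    {j : ℕ} {o : V} {T : ℕ} (H : Paper.HistoryGraph G j o T true)
    (hj1 : 1 ≤ j) (hjdeg : ∀ x, j ≤ G.degree x) (t : ℕ) :
    (Paper.vertexExpansion G - j + 2) *
      (((H.U \ H.Ustar).filter (fun u => u.2 = t + 1)).card : ℝ) ≤
      ((H.U.filter (fun u => u.2 = t)).card : ℝ) := by
  classical
  set A : Finset V :=
    ((H.U \ H.Ustar).filter (fun u => u.2 = t + 1)).image Prod.fst with hAdef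
  set K : Finset V := (H.U.filter (fun u => u.2 = t)).image Prod.fst with hKdef
  have hAcard : A.card = ((H.U \ H.Ustar).filter (fun u => u.2 = t + 1)).card := by
    apply Finset.card_image_of_injOn
    intro u hu v hv h
    exact prodext h (((Finset.mem_filter.1 hu).2).trans ((Finset.mem_filter.1 hv).2).symm)
  have hKcard : (K.card : ℝ) ≤ ((H.U.filter (fun u => u.2 = t)).card : ℝ) := by
    exact_mod_cast Finset.card_image_le
  have hmemA : ∀ x ∈ A, (x, t + 1) ∈ H.U ∧ (x, t + 1) ∉ H.Ustar := by
    intro x hx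
    obtain ⟨⟨x', t'⟩, hu, rfl⟩ := Finset.mem_image.1 hx
    have h1 := Finset.mem_filter.1 hu
    have h2 := Finset.mem_sdiff.1 h1.1
    have ht' : t' = t + 1 := h1.2
    subst ht'
    exact h2
  have hmemK : ∀ x : V, (x, t) ∈ H.U → x ∈ K := by
    intro x hx
    exact Finset.mem_image.2 ⟨(x, t), Finset.mem_filter.2 ⟨hx, rfl⟩, rfl⟩
  -- every vertex of A is in K (straight edge)
  have hAK : A ⊆ K := by
    intro x hx
    obtain ⟨hU, hS⟩ := hmemA x hx
    have hc := H.straight_count (x, t + 1) hU hS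
    obtain ⟨e, heF, h1, h2⟩ := exists_mem_filter_of_card Nat.one_pos hc
    have ht := H.edge_time e heF
    rw [h1] at ht
    have ht2 : e.2.2 = t := by omega
    have hsnd : e.2 = (x, t) := prodext (by simpa using h2) ht2
    have := H.edge_mem_snd e heF
    rw [hsnd] at this
    exact hmemK x this
  -- every vertex of A has ≥ deg + 1 - j neighbours in K (oblique edges)
  have hOb : ∀ x ∈ A, G.degree x + 1 - j ≤
      ((G.neighborFinset x).filter (fun y => y ∈ K)).card := by
    intro x hx
    obtain ⟨hU, hS⟩ := hmemA x hx
    have hcnt := H.oblique_count (x, t + 1) hU hS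
    rw [show G.degree x = G.degree (x, t+1).1 from rfl, ← hcnt]
    apply Finset.card_le_card_of_injOn (fun e => e.2.1)
    · intro e he
      obtain ⟨heF, he1, he2⟩ := mem_filter' he
      have hadj : G.Adj x e.2.1 := by
        rcases H.edge_space e heF with h | h
        · exact absurd (by rw [he1] at h; exact h.symm) he2
        · rw [he1] at h; exact h
      have ht := H.edge_time e heF
      rw [he1] at ht
      have ht2 : e.2.2 = t := by omega
      have hsnd : e.2 = (e.2.1, t) := prodext rfl ht2
      have hmm := H.edge_mem_snd e heF
      rw [hsnd] at hmm
      refine Finset.mem_filter.2 ⟨?_, hmemK _ hmm⟩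
      rw [SimpleGraph.mem_neighborFinset]
      exact hadj
    · intro e he e' he' hee
      replace he := mem_filter' (Finset.mem_coe.mp he)
      replace he' := mem_filter' (Finset.mem_coe.mp he')
      have h1 : e.1 = e'.1 := he.2.1.trans he'.2.1.symm
      have h2 : e.2.2 = e'.2.2 := by
        have a1 := H.edge_time e he.1
        have a2 := H.edge_time e' he'.1
        rw [he.2.1] at a1; rw [he'.2.1] at a2
        omega
      exact prodext h1 (prodext hee h2)
  -- hence ≤ j - 1 neighbours outside K
  have hNotK : ∀ x ∈ A, ((G.neighborFinset x).filter (fun y => y ∉ K)).card ≤ j - 1 := by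
    intro x hx
    have hsum := Finset.card_filter_add_card_filter_not
      (s := G.neighborFinset x) (p := fun y => y ∈ K)
    have hdeg : (G.neighborFinset x).card = G.degree x := G.card_neighborFinset_eq_degree x
    have h1 := hOb x hx
    have h2 := hjdeg x
    omega
  -- the vertex boundary of A
  set B : Finset V := (A.biUnion fun x => G.neighborFinset x) \ A with hBdef
  have hBnotK : ((B.filter (fun y => y ∉ K)).card : ℝ) ≤ (A.card : ℝ) * ((j : ℝ) - 1) := by
    have hsub : B.filter (fun y => y ∉ K) ⊆
        A.biUnion fun x => (G.neighborFinset x).filter (fun y => y ∉ K) := by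
      intro y hy
      obtain ⟨hyB, hyK⟩ := Finset.mem_filter.1 hy
      obtain ⟨hyU, _⟩ := Finset.mem_sdiff.1 hyB
      obtain ⟨x, hxA, hyx⟩ := Finset.mem_biUnion.1 hyU
      exact Finset.mem_biUnion.2 ⟨x, hxA, Finset.mem_filter.2 ⟨hyx, hyK⟩⟩
    have h1 : (B.filter (fun y => y ∉ K)).card ≤
        ∑ x ∈ A, ((G.neighborFinset x).filter (fun y => y ∉ K)).card :=
      le_trans (Finset.card_le_card hsub) (Finset.card_biUnion_le)
    have h2 : ∑ x ∈ A, ((G.neighborFinset x).filter (fun y => y ∉ K)).card ≤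
        A.card * (j - 1) := by
      calc ∑ x ∈ A, ((G.neighborFinset x).filter (fun y => y ∉ K)).card
          ≤ ∑ _x ∈ A, (j - 1) := Finset.sum_le_sum fun x hx => hNotK x hx
        _ = A.card * (j - 1) := by rw [Finset.sum_const, smul_eq_mul]
    have h3 : (B.filter (fun y => y ∉ K)).card ≤ A.card * (j - 1) := le_trans h1 h2
    have hcast : ((A.card * (j - 1) : ℕ) : ℝ) = (A.card : ℝ) * ((j : ℝ) - 1) := by
      rw [Nat.cast_mul, Nat.cast_sub hj1, Nat.cast_one]
    calc ((B.filter (fun y => y ∉ K)).card : ℝ) ≤ ((A.card * (j - 1) : ℕ) : ℝ) := by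
          exact_mod_cast h3
      _ = (A.card : ℝ) * ((j : ℝ) - 1) := hcast
  have hKbig : (A.card : ℝ) + ((B.filter (fun y => y ∈ K)).card : ℝ) ≤ (K.card : ℝ) := by
    have hdisj : Disjoint A (B.filter (fun y => y ∈ K)) := by
      refine Finset.disjoint_left.2 fun a ha hb => ?_
      exact (Finset.mem_sdiff.1 (Finset.mem_filter.1 hb).1).2 ha
    have hsub : A ∪ B.filter (fun y => y ∈ K) ⊆ K :=
      Finset.union_subset hAK (fun y hy => (Finset.mem_filter.1 hy).2)
    have := Finset.card_le_card hsub
    rw [Finset.card_union_of_disjoint hdisj] at this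
    exact_mod_cast this
  have hsplit : ((B.filter (fun y => y ∈ K)).card : ℝ) +
      ((B.filter (fun y => y ∉ K)).card : ℝ) = (B.card : ℝ) := by
    exact_mod_cast Finset.card_filter_add_card_filter_not
      (s := B) (p := fun y => y ∈ K)
  rw [← hAcard]
  rcases A.eq_empty_or_nonempty with hA | hA
  · rw [hA]
    simp
  · have hPhi : Paper.vertexExpansion G * A.card ≤ (B.card : ℝ) := phi_mul_card_le G A hA
    have hgoal : (Paper.vertexExpansion G - j + 2) * (A.card : ℝ) ≤ (K.card : ℝ) := by
      nlinarith [hPhi, hBnotK, hKbig, hsplit]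
    exact le_trans hgoal hKcard

open Paper in
/-- the vertex-expansion history-graph inequality (Lemma 4.6) for the
`j`-neighbour Bootstrap Percolation. -/
theorem historyGraph_vertex_expansion_inequality_BP
    {V : Type*} [Infinite V] [DecidableEq V]
    (G : SimpleGraph V) [DecidableRel G.Adj] [∀ v, Fintype (G.neighborSet v)]
    (hconn : G.Connected)
    (Δ : ℕ) (hΔ : IsLUB (Set.range fun x => G.degree x) Δ)
    (δ : ℕ) (hδ : IsGLB (Set.range fun x => G.degree x) δ)
    (j : ℕ) (hj1 : 1 ≤ j) (hjδ : j ≤ δ)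
    (o : V) (T : ℕ) (H : HistoryGraph G j o T true) :
    (vertexExpansion G - j + 1) * H.U.card + 1 ≤
      (vertexExpansion G - j + 2) * H.Ustar.card := by
  classical
  have hjdeg : ∀ x, j ≤ G.degree x := fun x => hjδ.trans (hδ.1 (Set.mem_range_self x))
  -- every vertex of U with time 0 is in Ustar
  have hzero : ∀ u ∈ H.U, u.2 = 0 → u ∈ H.Ustar := by
    intro u hu h0
    by_contra hns
    have hc := H.straight_count u hu hns
    obtain ⟨e, heF, h1, h2⟩ := exists_mem_filter_of_card Nat.one_pos hc
    have ht := H.edge_time e heF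
    rw [h1, h0] at ht
    omega
  set D : Finset (V × ℕ) := H.U \ H.Ustar with hDdef
  have htime : ∀ u ∈ H.U, u.2 < T + 1 := by
    intro u hu
    by_cases h : u = (o, T)
    · rw [h]; exact Nat.lt_succ_self T
    · exact Nat.lt_succ_of_le (H.time_range u hu h).2
  have hUfib : H.U.card = ∑ t ∈ Finset.range (T + 1), (H.U.filter fun u => u.2 = t).card := by
    apply Finset.card_eq_sum_card_fiberwise (f := Prod.snd)
    intro u hu
    exact Finset.mem_range.2 (htime u hu)
  have hDfib : D.card = ∑ t ∈ Finset.range (T + 1), (D.filter fun u => u.2 = t).card := by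
    apply Finset.card_eq_sum_card_fiberwise (f := Prod.snd)
    intro u hu
    exact Finset.mem_range.2 (htime u (Finset.mem_sdiff.1 hu).1)
  have hg0 : (D.filter fun u => u.2 = 0).card = 0 := by
    rw [Finset.card_eq_zero, Finset.filter_eq_empty_iff]
    intro u hu h0
    obtain ⟨h1, h2⟩ := Finset.mem_sdiff.1 hu
    exact h2 (hzero u h1 h0)
  have hfT : (1 : ℝ) ≤ ((H.U.filter fun u => u.2 = T).card : ℝ) := by
    have : 0 < (H.U.filter fun u => u.2 = T).card :=
      Finset.card_pos.2 ⟨(o, T), Finset.mem_filter.2 ⟨H.root_mem, rfl⟩⟩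
    exact_mod_cast this
  have key : ∀ t, (vertexExpansion G - j + 2) * ((D.filter fun u => u.2 = t + 1).card : ℝ) ≤
      ((H.U.filter fun u => u.2 = t).card : ℝ) := slice_ineq G H hj1 hjdeg
  have hDcard : (D.card : ℝ) = (H.U.card : ℝ) - (H.Ustar.card : ℝ) := by
    rw [hDdef, Finset.card_sdiff_of_subset H.ustar_subset,
      Nat.cast_sub (Finset.card_le_card H.ustar_subset)]
  -- sum the slice inequalities
  have h1 : ((H.U.card : ℝ)) =
      ∑ t ∈ Finset.range (T + 1), ((H.U.filter fun u => u.2 = t).card : ℝ) := by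
    rw [hUfib]; push_cast; rfl
  have h2 : ∑ t ∈ Finset.range (T + 1), ((H.U.filter fun u => u.2 = t).card : ℝ)
      = ∑ t ∈ Finset.range T, ((H.U.filter fun u => u.2 = t).card : ℝ) +
        ((H.U.filter fun u => u.2 = T).card : ℝ) := Finset.sum_range_succ _ _
  have h3 : (D.card : ℝ) =
      ∑ t ∈ Finset.range (T + 1), ((D.filter fun u => u.2 = t).card : ℝ) := by
    rw [hDfib]; push_cast; rfl
  have h4 : ∑ t ∈ Finset.range (T + 1), ((D.filter fun u => u.2 = t).card : ℝ)
      = ∑ t ∈ Finset.range T, ((D.filter fun u => u.2 = t + 1).card : ℝ) +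
        ((D.filter fun u => u.2 = 0).card : ℝ) := Finset.sum_range_succ' _ _
  have h5 : (vertexExpansion G - j + 2) *
      ∑ t ∈ Finset.range T, ((D.filter fun u => u.2 = t + 1).card : ℝ) ≤
      ∑ t ∈ Finset.range T, ((H.U.filter fun u => u.2 = t).card : ℝ) := by
    rw [Finset.mul_sum]
    exact Finset.sum_le_sum fun t _ => key t
  have hg0' : ((D.filter fun u => u.2 = 0).card : ℝ) = 0 := by exact_mod_cast hg0
  have hsum : (vertexExpansion G - j + 2) * ((H.U.card : ℝ) - (H.Ustar.card : ℝ)) ≤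
      (H.U.card : ℝ) - 1 := by
    have e1 : (vertexExpansion G - j + 2) * ((H.U.card : ℝ) - (H.Ustar.card : ℝ)) =
        (vertexExpansion G - j + 2) *
          ∑ t ∈ Finset.range T, ((D.filter fun u => u.2 = t + 1).card : ℝ) := by
      rw [← hDcard, h3, h4, hg0', add_zero]
    rw [e1]
    linarith [h5, h1, h2, hfT]
  nlinarith [hsum]
end
end

section
/- For every (x,t) ∈ V×ℕ and every integer n ≥ 1, the number of history graphs for Ξ (where Ξ is either the j-threshold Consensus Process or the j-neighbour Bootstrap Percolation, over all possible roots (o,T) ∈ V×ℕ) whose vertex set 𝒰 has cardinality n and contains (x,t) is at most (1 + 2n)·(1 + Δ)^n·4^n·(1 + 2^Δ)^n. -/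
open Classical
noncomputable section

namespace Aux8

noncomputable def lo (α : Type*) : LinearOrder α := IsWellOrder.linearOrder WellOrderingRel

noncomputable def sortL {α : Type*} (S : Finset α) : List α :=
  letI := lo α; S.sort (· ≤ ·)

lemma mem_sortL {α : Type*} {S : Finset α} {a : α} : a ∈ sortL S ↔ a ∈ S := by
  letI := lo α; exact Finset.mem_sort _

lemma nodup_sortL {α : Type*} (S : Finset α) : (sortL S).Nodup := by
  letI := lo α; exact Finset.sort_nodup _ _

lemma length_sortL {α : Type*} (S : Finset α) : (sortL S).length = S.card := by
  letI := lo α; exact Finset.length_sort _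

variable {V : Type*} (G : SimpleGraph V) [DecidableRel G.Adj] [∀ v, Fintype (G.neighborSet v)]

noncomputable def nbrL (y : V) : List V := sortL (G.neighborFinset y)

lemma length_nbrL (y : V) : (nbrL G y).length = G.degree y := by
  rw [nbrL, length_sortL, SimpleGraph.card_neighborFinset_eq_degree]

lemma mem_nbrL {y w : V} : w ∈ nbrL G y ↔ w ∈ G.neighborFinset y := mem_sortL

noncomputable def eIdx (y w : V) : ℕ := letI := Classical.decEq V; (nbrL G y).idxOf w

noncomputable def dIdx (y : V) (i : ℕ) : V := (nbrL G y).getD i y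

lemma eIdx_lt {y w : V} (h : w ∈ G.neighborFinset y) : eIdx G y w < G.degree y := by
  letI := Classical.decEq V
  rw [← length_nbrL G y]
  exact List.idxOf_lt_length_iff.2 ((mem_nbrL G).2 h)

lemma dIdx_eIdx {y w : V} (h : w ∈ G.neighborFinset y) : dIdx G y (eIdx G y w) = w := by
  letI := Classical.decEq V
  have hlt : eIdx G y w < (nbrL G y).length := by
    rw [length_nbrL]; exact eIdx_lt G h
  rw [dIdx, List.getD_eq_getElem _ _ hlt]
  exact List.getElem_idxOf hlt


section Codes

variable (Δ : ℕ)

/-- encode a subset of the neighbours of `y` as a subset of `Fin Δ`. -/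
noncomputable def encodeSet (hΔ : 0 < Δ) (y : V) (S : Finset V) : Finset (Fin Δ) :=
  S.image fun w => if h : eIdx G y w < Δ then ⟨_, h⟩ else ⟨0, hΔ⟩

noncomputable def decodeSet (y : V) (s : Finset (Fin Δ)) : Finset V :=
  s.image fun i => dIdx G y i.val

lemma decodeSet_encodeSet (hΔ : 0 < Δ) {y : V} (hdeg : G.degree y ≤ Δ)
    {S : Finset V} (hS : S ⊆ G.neighborFinset y) :
    decodeSet G Δ y (encodeSet G Δ hΔ y S) = S := by
  ext w
  simp only [decodeSet, encodeSet, Finset.mem_image]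
  constructor
  · rintro ⟨i, ⟨v, hv, rfl⟩, rfl⟩
    have h1 : eIdx G y v < Δ := lt_of_lt_of_le (eIdx_lt G (hS hv)) hdeg
    simpa [h1, dIdx_eIdx G (hS hv)] using hv
  · intro hw
    have h1 : eIdx G y w < Δ := lt_of_lt_of_le (eIdx_lt G (hS hw)) hdeg
    exact ⟨_, ⟨w, hw, rfl⟩, by simp [h1, dIdx_eIdx G (hS hw)]⟩

/-- label of an up-neighbour: `0` if same vertex, `eIdx+1` if a neighbour. -/
noncomputable def lab (y w : V) : Fin (1 + Δ) :=
  if w = y then ⟨0, by omega⟩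
  else if h : eIdx G y w < Δ then ⟨eIdx G y w + 1, by omega⟩ else ⟨0, by omega⟩

noncomputable def unlab (y : V) (i : Fin (1 + Δ)) : V :=
  if (i : ℕ) = 0 then y else dIdx G y ((i : ℕ) - 1)

lemma unlab_lab {y w : V} (hdeg : G.degree y ≤ Δ)
    (h : w = y ∨ w ∈ G.neighborFinset y) :
    unlab G Δ y (lab G Δ y w) = w := by
  rcases h with h | h
  · subst h; simp [lab, unlab]
  · have hne : w ≠ y := by
      intro he; subst he
      exact G.irrefl ((SimpleGraph.mem_neighborFinset _ _ _).1 h)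
    have h1 : eIdx G y w < Δ := lt_of_lt_of_le (eIdx_lt G h) hdeg
    rw [lab, if_neg hne, dif_pos h1, unlab]
    simp only [Nat.add_sub_cancel]
    rw [if_neg (by omega)]
    exact dIdx_eIdx G h

end Codes

section Explore

noncomputable def outN (F : Finset ((V × ℕ) × (V × ℕ))) (u : V × ℕ) : Finset (V × ℕ) :=
  (F.filter fun e => e.1 = u).image Prod.snd

noncomputable def inN (F : Finset ((V × ℕ) × (V × ℕ))) (u : V × ℕ) : Finset (V × ℕ) :=
  (F.filter fun e => e.2 = u).image Prod.fst

lemma mem_outN {F : Finset ((V × ℕ) × (V × ℕ))} {u v : V × ℕ} :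
    v ∈ outN F u ↔ (u, v) ∈ F := by
  constructor
  · rintro h
    obtain ⟨e, he, rfl⟩ := Finset.mem_image.1 h
    obtain ⟨he1, he2⟩ := Finset.mem_filter.1 he
    rwa [show e = (u, e.2) from Prod.ext he2 rfl] at he1
  · intro h
    exact Finset.mem_image.2 ⟨(u, v), Finset.mem_filter.2 ⟨h, rfl⟩, rfl⟩

lemma mem_inN {F : Finset ((V × ℕ) × (V × ℕ))} {u v : V × ℕ} :
    v ∈ inN F u ↔ (v, u) ∈ F := by
  constructor
  · rintro h
    obtain ⟨e, he, rfl⟩ := Finset.mem_image.1 h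
    obtain ⟨he1, he2⟩ := Finset.mem_filter.1 he
    rwa [show e = (e.1, u) from Prod.ext rfl he2] at he1
  · intro h
    exact Finset.mem_image.2 ⟨(v, u), Finset.mem_filter.2 ⟨h, rfl⟩, rfl⟩

variable (Δ : ℕ) (x : V) (t : ℕ)

/-- the exploration process: discovered list and emitted word. -/
noncomputable def explore (F : Finset ((V × ℕ) × (V × ℕ))) :
    ℕ → List (V × ℕ) × List (Option (Fin (1 + Δ)))
  | 0 => ([(x, t)], [])
  | k + 1 =>
      let p := explore F k
      if h : k < p.1.length then
        let u := p.1[k]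
        let ol := sortL (outN F u \ p.1.toFinset)
        let il := sortL (inN F u \ p.1.toFinset)
        (p.1 ++ ol ++ il, p.2 ++ il.map (fun v => some (lab G Δ u.1 v.1)) ++ [none])
      else p

lemma explore_prefix (F : Finset ((V × ℕ) × (V × ℕ))) {k m : ℕ} (h : k ≤ m) :
    (explore G Δ x t F k).1 <+: (explore G Δ x t F m).1 ∧
      (explore G Δ x t F k).2 <+: (explore G Δ x t F m).2 := by
  induction m with
  | zero => simp_all
  | succ m ih =>
      rcases Nat.lt_or_ge k (m+1) with h' | h'
      · have := ih (by omega)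
        refine ⟨this.1.trans ?_, this.2.trans ?_⟩ <;>
        · rw [explore]
          split
          · simp [List.prefix_append]
          · exact List.prefix_rfl
      · have : k = m + 1 := by omega
        subst this; exact ⟨List.prefix_rfl, List.prefix_rfl⟩

lemma explore_length_mono (F : Finset ((V × ℕ) × (V × ℕ))) {k m : ℕ} (h : k ≤ m) :
    (explore G Δ x t F k).1.length ≤ (explore G Δ x t F m).1.length :=
  (explore_prefix G Δ x t F h).1.length_le

lemma explore_stable (F : Finset ((V × ℕ) × (V × ℕ))) {k m : ℕ}
    (hk : (explore G Δ x t F k).1.length ≤ k) (h : k ≤ m) :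
    explore G Δ x t F m = explore G Δ x t F k := by
  induction m with
  | zero => cases Nat.le_zero.1 h; rfl
  | succ m ih =>
      rcases Nat.lt_or_ge k (m+1) with h' | h'
      · have e := ih (by omega)
        rw [explore, e, dif_neg]
        omega
      · have : k = m + 1 := by omega
        subst this; rfl

end Explore

section WithH
open Paper

variable (Δ : ℕ) (x : V) (t : ℕ) {j : ℕ} {o : V} {T : ℕ} {bp : Bool} {n : ℕ}

lemma mem_explore (H : HistoryGraph G j o T bp) (hx : (x, t) ∈ H.U) :
    ∀ k, ∀ v ∈ (explore G Δ x t H.F k).1, v ∈ H.U := by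
  intro k
  induction k with
  | zero => intro v hv; rw [explore] at hv; simp at hv; subst hv; exact hx
  | succ k ih =>
      intro v hv
      rw [explore] at hv
      split at hv
      · simp only [List.mem_append] at hv
        rcases hv with (hv | hv) | hv
        · exact ih v hv
        · have := Finset.mem_sdiff.1 (mem_sortL.1 hv)
          exact H.edge_mem_snd _ (mem_outN.1 this.1)
        · have := Finset.mem_sdiff.1 (mem_sortL.1 hv)
          exact H.edge_mem_fst _ (mem_inN.1 this.1)
      · exact ih v hv

lemma nodup_explore (H : HistoryGraph G j o T bp) :
    ∀ k, (explore G Δ x t H.F k).1.Nodup := by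
  intro k
  induction k with
  | zero => rw [explore]; simp
  | succ k ih =>
      rw [explore]
      split
      · rename_i h
        simp only [List.nodup_append]
        refine ⟨⟨ih, nodup_sortL _, ?_⟩, nodup_sortL _, ?_⟩
        · rintro a ha _ ha' rfl
          have := Finset.mem_sdiff.1 (mem_sortL.1 ha')
          exact this.2 (List.mem_toFinset.2 ha)
        · rintro a ha _ ha' rfl
          have ha2 := mem_sortL.1 ha'
          have hin := (Finset.mem_sdiff.1 ha2).1
          rcases List.mem_append.1 ha with ha | ha
          · exact (Finset.mem_sdiff.1 ha2).2 (List.mem_toFinset.2 ha)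
          · have hout := (Finset.mem_sdiff.1 (mem_sortL.1 ha)).1
            have e1 := H.edge_time _ (mem_outN.1 hout)
            have e2 := H.edge_time _ (mem_inN.1 hin)
            simp at e1 e2
            omega
      · exact ih

lemma explore_subset_U (H : HistoryGraph G j o T bp) (hx : (x, t) ∈ H.U) (k : ℕ) :
    (explore G Δ x t H.F k).1.toFinset ⊆ H.U := by
  intro v hv
  exact mem_explore G Δ x t H hx k v (List.mem_toFinset.1 hv)

lemma explore_length_le (H : HistoryGraph G j o T bp) (hU : H.U.card = n)
    (hx : (x, t) ∈ H.U) (k : ℕ) : (explore G Δ x t H.F k).1.length ≤ n := by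
  rw [← List.toFinset_card_of_nodup (nodup_explore G Δ x t H k), ← hU]
  exact Finset.card_le_card (explore_subset_U G Δ x t H hx k)

lemma explore_cover (H : HistoryGraph G j o T bp) (hx : (x, t) ∈ H.U) (k : ℕ)
    (hlen : (explore G Δ x t H.F k).1.length ≤ k)
    (hproc : ∀ i, i < k → i < (explore G Δ x t H.F i).1.length) :
    ∀ y ∈ H.U, y ∈ (explore G Δ x t H.F k).1 := by
  have closure : ∀ v ∈ (explore G Δ x t H.F k).1, ∀ w,
      ((v, w) ∈ H.F ∨ (w, v) ∈ H.F) → w ∈ (explore G Δ x t H.F k).1 := by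
    intro v hv w hw
    obtain ⟨i, hi, hvi⟩ := List.mem_iff_getElem.1 hv
    have hik : i < k := lt_of_lt_of_le hi hlen
    have hip : i < (explore G Δ x t H.F i).1.length := hproc i hik
    have hgu : (explore G Δ x t H.F i).1[i] = v :=
      ((explore_prefix G Δ x t H.F hik.le).1.getElem hip).trans hvi
    have hsub : (explore G Δ x t H.F (i+1)).1 ⊆ (explore G Δ x t H.F k).1 :=
      (explore_prefix G Δ x t H.F (by omega)).1.subset
    apply hsub
    rw [explore, dif_pos hip]
    simp only [List.mem_append]
    by_cases hmem : w ∈ (explore G Δ x t H.F i).1.toFinset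
    · exact Or.inl (Or.inl (List.mem_toFinset.1 hmem))
    · rcases hw with hw | hw
      · exact Or.inl (Or.inr (mem_sortL.2 (Finset.mem_sdiff.2
          ⟨mem_outN.2 (by rw [hgu]; exact hw), hmem⟩)))
      · exact Or.inr (mem_sortL.2 (Finset.mem_sdiff.2
          ⟨mem_inN.2 (by rw [hgu]; exact hw), hmem⟩))
  intro y hy
  have hbase : (x, t) ∈ (explore G Δ x t H.F k).1 :=
    (explore_prefix G Δ x t H.F (Nat.zero_le k)).1.subset (by rw [explore]; simp)
  have hconn := H.conn (x, t) hx y hy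
  induction hconn with
  | refl => exact hbase
  | tail _ hbc ih =>
      refine closure _ (ih ?_) _ hbc
      rcases hbc with h | h
      · exact H.edge_mem_fst _ h
      · exact H.edge_mem_snd _ h

lemma all_processed (H : HistoryGraph G j o T bp) (hU : H.U.card = n)
    (hx : (x, t) ∈ H.U) : ∀ k, k < n → k < (explore G Δ x t H.F k).1.length := by
  intro k
  induction k using Nat.strong_induction_on with
  | _ k ih =>
      intro hk
      by_contra hcon
      push_neg at hcon
      have hcov := explore_cover G Δ x t H hx k hcon
        (fun i hik => ih i hik (by omega))
      have : H.U ⊆ (explore G Δ x t H.F k).1.toFinset := by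
        intro y hy; exact List.mem_toFinset.2 (hcov y hy)
      have := Finset.card_le_card this
      rw [hU, List.toFinset_card_of_nodup (nodup_explore G Δ x t H k)] at this
      omega

lemma final_explore (H : HistoryGraph G j o T bp) (hU : H.U.card = n)
    (hx : (x, t) ∈ H.U) :
    (explore G Δ x t H.F n).1.length = n ∧
      (explore G Δ x t H.F n).1.toFinset = H.U := by
  have hlen := explore_length_le G Δ x t H hU hx n
  have hcov := explore_cover G Δ x t H hx n hlen (all_processed G Δ x t H hU hx)
  have heq : (explore G Δ x t H.F n).1.toFinset = H.U := by
    apply Finset.Subset.antisymm (explore_subset_U G Δ x t H hx n)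
    intro y hy; exact List.mem_toFinset.2 (hcov y hy)
  refine ⟨?_, heq⟩
  rw [← List.toFinset_card_of_nodup (nodup_explore G Δ x t H n), heq, hU]

lemma countP_map_some {α β : Type*} (l : List α) (f : α → β) :
    (l.map fun v => some (f v)).countP (·.isSome) = l.length := by
  rw [List.countP_map]
  exact List.countP_eq_length.2 fun a _ => rfl

lemma word_bound (F : Finset ((V × ℕ) × (V × ℕ))) : ∀ k,
    (explore G Δ x t F k).2.length + 1 ≤ k + (explore G Δ x t F k).1.length ∧
    (explore G Δ x t F k).2.countP (·.isSome) + 1 ≤ (explore G Δ x t F k).1.length := by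
  intro k
  induction k with
  | zero => rw [explore]; simp
  | succ k ih =>
      rw [explore]
      split
      · simp only [List.length_append, List.countP_append, List.length_map,
          countP_map_some, List.countP_cons, List.countP_nil, List.length_cons,
          List.length_nil, Option.isSome_none]
        simp only [Bool.false_eq_true, if_false]
        omega
      · exact ⟨by have := ih.1; omega, ih.2⟩

end WithH

section Recon
open Paper

variable (Δ : ℕ) {j : ℕ} {o : V} {T : ℕ} {bp : Bool}

noncomputable def oblqF (F : Finset ((V × ℕ) × (V × ℕ))) (u : V × ℕ) : Finset V :=
  (G.neighborFinset u.1).filter fun w => (u, (w, u.2 - 1)) ∈ F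

noncomputable def tokOf (hΔ : 0 < Δ) (H : HistoryGraph G j o T bp) (u : V × ℕ) :
    Option (Finset (Fin Δ)) :=
  if u ∈ H.Ustar then none else some (encodeSet G Δ hΔ u.1 (oblqF G H.F u))

noncomputable def outDec (b : Bool) (u : V × ℕ) :
    Option (Finset (Fin Δ)) → Finset (V × ℕ)
  | none => ∅
  | some s => ((decodeSet G Δ u.1 s).image fun w => (w, u.2 - 1)) ∪
      (if b then {(u.1, u.2 - 1)} else ∅)

lemma bp_true_of_straight (H : HistoryGraph G j o T bp) {e : (V × ℕ) × (V × ℕ)}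
    (he : e ∈ H.F) (hu : e.1 ∈ H.U) (hust : e.1 ∉ H.Ustar) (hst : e.2.1 = e.1.1) :
    bp = true := by
  have hc := H.straight_count e.1 hu hust
  have hne : (H.F.filter fun e' => e'.1 = e.1 ∧ e'.2.1 = e.1.1).Nonempty :=
    ⟨e, Finset.mem_filter.2 ⟨he, rfl, hst⟩⟩
  have := Finset.card_pos.2 hne
  cases bp with
  | false => simp only [Bool.cond_false] at hc; omega
  | true => rfl

lemma not_mem_ustar_of_edge (H : HistoryGraph G j o T bp) {e : (V × ℕ) × (V × ℕ)}
    (he : e ∈ H.F) : e.1 ∉ H.Ustar := fun h => H.star_no_out e.1 h e he rfl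

lemma straight_edge_mem (H : HistoryGraph G j o T bp) {u : V × ℕ} (hu : u ∈ H.U)
    (hust : u ∉ H.Ustar) (hbp : bp = true) : (u, (u.1, u.2 - 1)) ∈ H.F := by
  subst hbp
  have hc := H.straight_count u hu hust
  simp only [Bool.cond_true] at hc
  obtain ⟨e, he⟩ := Finset.card_eq_one.1 hc
  have hee : e ∈ H.F.filter fun e' => e'.1 = u ∧ e'.2.1 = u.1 :=
    he.ge (Finset.mem_singleton_self e)
  obtain ⟨heF, he1, he2⟩ := Finset.mem_filter.1 hee
  have ht := H.edge_time e heF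
  have : e = (u, (u.1, u.2 - 1)) := by
    rcases e with ⟨a, b⟩
    simp only at he1 he2 ht ⊢
    subst he1
    refine Prod.ext rfl (Prod.ext he2 ?_)
    simp only at ht ⊢
    omega
  rwa [this] at heF

lemma outN_eq (hΔ1 : 0 < Δ) (hdeg : ∀ y, G.degree y ≤ Δ)
    (H : HistoryGraph G j o T bp) {u : V × ℕ} (hu : u ∈ H.U) :
    outN H.F u = outDec G Δ bp u (tokOf G Δ hΔ1 H u) := by
  by_cases hust : u ∈ H.Ustar
  · rw [tokOf, if_pos hust, outDec]
    ext v
    simp only [Finset.notMem_empty, iff_false]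
    intro hv
    exact H.star_no_out u hust _ (mem_outN.1 hv) rfl
  · rw [tokOf, if_neg hust, outDec,
      decodeSet_encodeSet G Δ hΔ1 (hdeg u.1)
        (S := oblqF G H.F u) (Finset.filter_subset _ _)]
    ext v
    rw [mem_outN, Finset.mem_union]
    constructor
    · intro hv
      have ht := H.edge_time (u, v) hv
      simp only at ht
      have hv2 : v.2 = u.2 - 1 := by omega
      rcases H.edge_space (u, v) hv with hs | hs
      · right
        have hbp : bp = true := bp_true_of_straight G H hv hu hust hs.symm
        rw [hbp, if_pos rfl]
        simp only [Finset.mem_singleton]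
        exact Prod.ext hs.symm hv2
      · left
        refine Finset.mem_image.2 ⟨v.1, ?_, Prod.ext rfl hv2.symm⟩
        refine Finset.mem_filter.2 ⟨(SimpleGraph.mem_neighborFinset _ _ _).2 hs, ?_⟩
        rwa [show ((v.1 : V), u.2 - 1) = v from Prod.ext rfl hv2.symm]
    · intro hv
      rcases hv with hv | hv
      · obtain ⟨w, hw, rfl⟩ := Finset.mem_image.1 hv
        exact (Finset.mem_filter.1 hw).2
      · split at hv
        · rename_i hbp
          rw [Finset.mem_singleton.1 hv]
          exact straight_edge_mem G H hu hust hbp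
        · simp at hv

lemma inN_props (H : HistoryGraph G j o T bp) {u v : V × ℕ} (h : v ∈ inN H.F u) :
    v.2 = u.2 + 1 ∧ (v.1 = u.1 ∨ v.1 ∈ G.neighborFinset u.1) := by
  have hF := mem_inN.1 h
  have ht := H.edge_time (v, u) hF
  simp only at ht
  refine ⟨ht, ?_⟩
  rcases H.edge_space (v, u) hF with hs | hs
  · exact Or.inl hs
  · exact Or.inr ((SimpleGraph.mem_neighborFinset _ _ _).2 hs.symm)

lemma F_eq (H : HistoryGraph G j o T bp) (e : (V × ℕ) × (V × ℕ)) :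
    e ∈ H.F ↔ e.1 ∈ H.U ∧ e.1 ∉ H.Ustar ∧
      ((bp = true ∧ e.2 = (e.1.1, e.1.2 - 1)) ∨
        (e.2.1 ∈ oblqF G H.F e.1 ∧ e.2 = (e.2.1, e.1.2 - 1))) := by
  constructor
  · intro he
    refine ⟨H.edge_mem_fst e he, not_mem_ustar_of_edge G H he, ?_⟩
    have ht := H.edge_time e he
    have h2 : e.2.2 = e.1.2 - 1 := by omega
    rcases H.edge_space e he with hs | hs
    · exact Or.inl ⟨bp_true_of_straight G H he (H.edge_mem_fst e he)
        (not_mem_ustar_of_edge G H he) hs.symm, Prod.ext hs.symm h2⟩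
    · refine Or.inr ⟨?_, Prod.ext rfl h2⟩
      refine Finset.mem_filter.2 ⟨(SimpleGraph.mem_neighborFinset _ _ _).2 hs, ?_⟩
      have h3 : ((e.1 : V × ℕ), ((e.2.1 : V), e.1.2 - 1)) = e :=
        Prod.ext rfl (Prod.ext rfl h2.symm)
      rw [h3]; exact he
  · rintro ⟨hu, hust, (⟨hbp, h2⟩ | ⟨hob, h2⟩)⟩
    · have := straight_edge_mem G H hu hust hbp
      rwa [show e = (e.1, (e.1.1, e.1.2 - 1)) from Prod.ext rfl h2]
    · have := (Finset.mem_filter.1 hob).2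
      rwa [show e = (e.1, (e.2.1, e.1.2 - 1)) from Prod.ext rfl h2]

end Recon

section ListAux

lemma optionList_eq {α : Type*} (d : α) :
    ∀ (l : List (Option α)) (l' : List (Option α)) (K : ℕ),
      l.countP (·.isSome) ≤ K → l'.countP (·.isSome) ≤ K →
      (∀ m, (l.getD m none).isSome = (l'.getD m none).isSome) →
      (∀ i, i < K → l.reduceOption.getD i d = l'.reduceOption.getD i d) →
      ∀ m, l.getD m none = l'.getD m none := by
  intro l
  induction l with
  | nil =>
      intro l' K _ _ hprof _ m
      have h := hprof m
      rw [List.getD_nil] at h ⊢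
      cases hc : l'.getD m none with
      | none => rfl
      | some b => rw [hc] at h; simp at h
  | cons a tl ih =>
      intro l' K hc hc' hprof hred m
      cases l' with
      | nil =>
          have h := hprof m
          rw [List.getD_nil] at h ⊢
          cases hc2 : (a :: tl).getD m none with
          | none => rfl
          | some b => rw [hc2] at h; simp at h
      | cons a' tl' =>
          have h0 := hprof 0
          simp only [List.getD_cons_zero] at h0
          cases m with
          | zero =>
              simp only [List.getD_cons_zero]
              cases a with
              | none =>
                  cases a' with
                  | none => rfl
                  | some b' => simp at h0
              | some b =>
                  cases a' with
                  | none => simp at h0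
                  | some b' =>
                      have hK : 0 < K := by
                        have : 0 < (some b :: tl).countP (·.isSome) := by
                          simp [List.countP_cons]
                        omega
                      have := hred 0 hK
                      rw [List.reduceOption_cons_of_some,
                        List.reduceOption_cons_of_some] at this
                      simp only [List.getD_cons_zero] at this
                      rw [this]
          | succ m =>
              simp only [List.getD_cons_succ]
              cases a with
              | none =>
                  cases a' with
                  | some b' => simp at h0
                  | none =>
                      refine ih tl' K ?_ ?_ ?_ ?_ m
                      · simpa [List.countP_cons] using hc
                      · simpa [List.countP_cons] using hc'
                      · intro m'; simpa [List.getD_cons_succ] using hprof (m'+1)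
                      · intro i hi
                        have := hred i hi
                        rwa [List.reduceOption_cons_of_none,
                          List.reduceOption_cons_of_none] at this
              | some b =>
                  cases a' with
                  | none => simp at h0
                  | some b' =>
                      refine ih tl' (K - 1) ?_ ?_ ?_ ?_ m
                      · have : (some b :: tl).countP (·.isSome)
                            = tl.countP (·.isSome) + 1 := by simp [List.countP_cons]
                        omega
                      · have : (some b' :: tl').countP (·.isSome)
                            = tl'.countP (·.isSome) + 1 := by simp [List.countP_cons]
                        omega
                      · intro m'; simpa [List.getD_cons_succ] using hprof (m'+1)
                      · intro i hi
                        have hK : 0 < K := by omega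
                        have := hred (i+1) (by omega)
                        rwa [List.reduceOption_cons_of_some,
                          List.reduceOption_cons_of_some, List.getD_cons_succ,
                          List.getD_cons_succ] at this

lemma seg_len_le {α : Type*} {W W' A B B' : List (Option α)}
    (hW : (A ++ (B ++ [none])) <+: W) (hW' : (A ++ (B' ++ [none])) <+: W')
    (hB : ∀ b ∈ B, b.isSome = true)
    (hpad : ∀ m, W.getD m none = W'.getD m none) : B.length ≤ B'.length := by
  by_contra hcon
  push_neg at hcon
  set m := A.length + B'.length with hm
  have hm' : m < (A ++ (B' ++ [none])).length := by
    simp only [List.length_append, List.length_cons, List.length_nil]; omega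
  have h1 : W'.getD m none = none := by
    rw [List.getD_eq_getElem _ _ (lt_of_lt_of_le hm' hW'.length_le),
      ← hW'.getElem hm', List.getElem_append_right (by omega),
      List.getElem_append_right (by omega)]
    simp
  have hm2 : m < (A ++ (B ++ [none])).length := by
    simp only [List.length_append, List.length_cons, List.length_nil]; omega
  have h2 : (W.getD m none).isSome = true := by
    rw [List.getD_eq_getElem _ _ (lt_of_lt_of_le hm2 hW.length_le),
      ← hW.getElem hm2, List.getElem_append_right (by omega),
      List.getElem_append_left (by omega)]
    exact hB _ (List.getElem_mem _)
  rw [hpad m, h1] at h2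
  simp at h2

lemma seg_eq {α : Type*} {W W' A B B' : List (Option α)}
    (hW : (A ++ (B ++ [none])) <+: W) (hW' : (A ++ (B' ++ [none])) <+: W')
    (hB : ∀ b ∈ B, b.isSome = true) (hB' : ∀ b ∈ B', b.isSome = true)
    (hpad : ∀ m, W.getD m none = W'.getD m none) : B = B' := by
  have hlen : B.length = B'.length :=
    le_antisymm (seg_len_le hW hW' hB hpad)
      (seg_len_le hW' hW hB' (fun m => (hpad m).symm))
  apply List.ext_getElem hlen
  intro i h1 h2
  have hm1 : A.length + i < (A ++ (B ++ [none])).length := by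
    simp only [List.length_append, List.length_cons, List.length_nil]; omega
  have hm2 : A.length + i < (A ++ (B' ++ [none])).length := by
    simp only [List.length_append, List.length_cons, List.length_nil]; omega
  have e1 : W.getD (A.length + i) none = B[i] := by
    rw [List.getD_eq_getElem _ _ (lt_of_lt_of_le hm1 hW.length_le),
      ← hW.getElem hm1, List.getElem_append_right (by omega),
      List.getElem_append_left (by omega)]
    congr 1
    omega
  have e2 : W'.getD (A.length + i) none = B'[i] := by
    rw [List.getD_eq_getElem _ _ (lt_of_lt_of_le hm2 hW'.length_le),
      ← hW'.getElem hm2, List.getElem_append_right (by omega),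
      List.getElem_append_left (by omega)]
    congr 1
    omega
  rw [← e1, ← e2, hpad]

end ListAux

abbrev Code (n Δ : ℕ) : Type :=
  Fin (1 + 2*n) × (Fin n → Option (Finset (Fin Δ))) × Finset (Fin (2*n-1)) ×
    (Fin (n-1) → Fin (1+Δ))

lemma card_Code (n Δ : ℕ) : Fintype.card (Code n Δ) =
    (1 + 2*n) * (2 ^ Δ + 1) ^ n * 2 ^ (2*n-1) * (Δ + 1) ^ (n-1) := by
  simp only [Code, Fintype.card_prod, Fintype.card_fun, Fintype.card_option,
    Fintype.card_finset, Fintype.card_fin]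
  ring

section CodeSec
open Paper

variable (Δ : ℕ) (x : V) (t : ℕ) (n : ℕ) {j : ℕ} {o : V} {T : ℕ} {bp : Bool}

noncomputable def myIdx' {α : Type*} (p : α) : List α → ℕ
  | [] => 0
  | a :: tl => if a = p then 0 else myIdx' p tl + 1

noncomputable def myIdx {α : Type*} (l : List α) (p : α) : ℕ := myIdx' p l

lemma myIdx_lt {α : Type*} {l : List α} {p : α} (h : p ∈ l) : myIdx l p < l.length := by
  induction l with
  | nil => simp at h
  | cons a tl ih =>
      rw [myIdx, myIdx']
      split
      · simp
      · rename_i hne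
        have : p ∈ tl := by
          rcases List.mem_cons.1 h with h | h
          · exact absurd h.symm hne
          · exact h
        have := ih this
        rw [myIdx] at this
        simp only [List.length_cons]
        omega

lemma getElem_myIdx {α : Type*} {l : List α} {p : α} (h : myIdx l p < l.length) :
    l[myIdx l p] = p := by
  induction l with
  | nil => simp at h
  | cons a tl ih =>
      by_cases hap : a = p
      · have h0 : myIdx (a :: tl) p = 0 := by rw [myIdx, myIdx', if_pos hap]
        simp only [h0] at h ⊢
        simpa using hap
      · have h0 : myIdx (a :: tl) p = myIdx tl p + 1 := by
          rw [myIdx, myIdx', if_neg hap]; rfl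
        simp only [h0] at h ⊢
        simp only [List.getElem_cons_succ]
        exact ih (by simpa using h)

noncomputable def encode (hn : 1 ≤ n) (hΔ1 : 0 < Δ) (H : HistoryGraph G j o T bp) :
    Code n Δ :=
  (⟨(myIdx (explore G Δ x t H.F n).1 (o, T)) % (1 + 2*n),
      Nat.mod_lt _ (by omega)⟩,
   fun i => tokOf G Δ hΔ1 H ((explore G Δ x t H.F n).1.getD i (x, 0)),
   Finset.univ.filter (fun i : Fin (2*n-1) =>
     ((explore G Δ x t H.F n).2.getD i none).isSome),
   fun i => ((explore G Δ x t H.F n).2.reduceOption).getD i ⟨0, by omega⟩)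

lemma explore_eq (hΔ1 : 0 < Δ) (hdeg : ∀ y, G.degree y ≤ Δ)
    {o' : V} {T' : ℕ}
    (H : HistoryGraph G j o T bp) (H' : HistoryGraph G j o' T' bp)
    (hU : H.U.card = n) (hx : (x, t) ∈ H.U)
    (hU' : H'.U.card = n) (hx' : (x, t) ∈ H'.U)
    (htok : ∀ i : ℕ, i < n →
      tokOf G Δ hΔ1 H ((explore G Δ x t H.F n).1.getD i (x, 0)) =
      tokOf G Δ hΔ1 H' ((explore G Δ x t H'.F n).1.getD i (x, 0)))
    (hpad : ∀ m : ℕ,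
      (explore G Δ x t H.F n).2.getD m none =
        (explore G Δ x t H'.F n).2.getD m none) :
    ∀ k, k ≤ n → explore G Δ x t H.F k = explore G Δ x t H'.F k := by
  intro k
  induction k with
  | zero => intro _; rw [explore, explore]
  | succ k ih =>
      intro hk1
      have he := ih (by omega)
      have hkn : k < n := by omega
      have hk : k < (explore G Δ x t H.F k).1.length :=
        all_processed G Δ x t H hU hx k hkn
      have hk' : k < (explore G Δ x t H'.F k).1.length :=
        all_processed G Δ x t H' hU' hx' k hkn
      have hL : (explore G Δ x t H.F k).1 = (explore G Δ x t H'.F k).1 :=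
        congrArg Prod.fst he
      have hW : (explore G Δ x t H.F k).2 = (explore G Δ x t H'.F k).2 :=
        congrArg Prod.snd he
      have hu' : (explore G Δ x t H'.F k).1[k]'hk' = (explore G Δ x t H.F k).1[k]'hk :=
        (List.getElem_of_eq hL hk).symm
      have hu_mem : (explore G Δ x t H.F k).1[k]'hk ∈ H.U :=
        mem_explore G Δ x t H hx k _ (List.getElem_mem _)
      have hu_mem' : (explore G Δ x t H.F k).1[k]'hk ∈ H'.U := by
        rw [← hu']
        exact mem_explore G Δ x t H' hx' k _ (List.getElem_mem _)
      have hgetD : (explore G Δ x t H.F n).1.getD k (x, 0) =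
          (explore G Δ x t H.F k).1[k]'hk := by
        have hkM : k < (explore G Δ x t H.F n).1.length :=
          lt_of_lt_of_le hk (explore_prefix G Δ x t H.F hkn.le).1.length_le
        rw [List.getD_eq_getElem _ _ hkM,
          ← (explore_prefix G Δ x t H.F hkn.le).1.getElem hk]
      have hgetD' : (explore G Δ x t H'.F n).1.getD k (x, 0) =
          (explore G Δ x t H.F k).1[k]'hk := by
        have hkM : k < (explore G Δ x t H'.F n).1.length :=
          lt_of_lt_of_le hk' (explore_prefix G Δ x t H'.F hkn.le).1.length_le
        rw [List.getD_eq_getElem _ _ hkM,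
          ← (explore_prefix G Δ x t H'.F hkn.le).1.getElem hk', hu']
      have htoku : tokOf G Δ hΔ1 H ((explore G Δ x t H.F k).1[k]'hk) =
          tokOf G Δ hΔ1 H' ((explore G Δ x t H.F k).1[k]'hk) := by
        have := htok k hkn
        rwa [hgetD, hgetD'] at this
      have hout : outN H.F ((explore G Δ x t H.F k).1[k]'hk) =
          outN H'.F ((explore G Δ x t H.F k).1[k]'hk) := by
        rw [outN_eq G Δ hΔ1 hdeg H hu_mem, outN_eq G Δ hΔ1 hdeg H' hu_mem', htoku]
      have hstep : explore G Δ x t H.F (k+1) =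
          ((explore G Δ x t H.F k).1
            ++ sortL (outN H.F ((explore G Δ x t H.F k).1[k]'hk)
                \ (explore G Δ x t H.F k).1.toFinset)
            ++ sortL (inN H.F ((explore G Δ x t H.F k).1[k]'hk)
                \ (explore G Δ x t H.F k).1.toFinset),
           (explore G Δ x t H.F k).2
            ++ (sortL (inN H.F ((explore G Δ x t H.F k).1[k]'hk)
                \ (explore G Δ x t H.F k).1.toFinset)).map
                (fun v => some (lab G Δ ((explore G Δ x t H.F k).1[k]'hk).1 v.1))
            ++ [none]) := by
        rw [explore, dif_pos hk]
      have hstep' : explore G Δ x t H'.F (k+1) =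
          ((explore G Δ x t H.F k).1
            ++ sortL (outN H'.F ((explore G Δ x t H.F k).1[k]'hk)
                \ (explore G Δ x t H.F k).1.toFinset)
            ++ sortL (inN H'.F ((explore G Δ x t H.F k).1[k]'hk)
                \ (explore G Δ x t H.F k).1.toFinset),
           (explore G Δ x t H.F k).2
            ++ (sortL (inN H'.F ((explore G Δ x t H.F k).1[k]'hk)
                \ (explore G Δ x t H.F k).1.toFinset)).map
                (fun v => some (lab G Δ ((explore G Δ x t H.F k).1[k]'hk).1 v.1))
            ++ [none]) := by
        rw [explore, dif_pos hk', hu', ← hL, ← hW]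
      have hil : sortL (inN H.F ((explore G Δ x t H.F k).1[k]'hk)
            \ (explore G Δ x t H.F k).1.toFinset) =
          sortL (inN H'.F ((explore G Δ x t H.F k).1[k]'hk)
            \ (explore G Δ x t H.F k).1.toFinset) := by
        have hWpre : ((explore G Δ x t H.F k).2 ++
            (((sortL (inN H.F ((explore G Δ x t H.F k).1[k]'hk)
                \ (explore G Δ x t H.F k).1.toFinset)).map
                (fun v => some (lab G Δ ((explore G Δ x t H.F k).1[k]'hk).1 v.1)))
              ++ [none])) <+: (explore G Δ x t H.F n).2 := by
          have h2 := (explore_prefix G Δ x t H.F (show k+1 ≤ n by omega)).2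
          rw [hstep] at h2
          simpa [List.append_assoc] using h2
        have hWpre' : ((explore G Δ x t H.F k).2 ++
            (((sortL (inN H'.F ((explore G Δ x t H.F k).1[k]'hk)
                \ (explore G Δ x t H.F k).1.toFinset)).map
                (fun v => some (lab G Δ ((explore G Δ x t H.F k).1[k]'hk).1 v.1)))
              ++ [none])) <+: (explore G Δ x t H'.F n).2 := by
          have h2 := (explore_prefix G Δ x t H'.F (show k+1 ≤ n by omega)).2
          rw [hstep'] at h2
          simpa [List.append_assoc] using h2
        have hBmem : ∀ l : List (V × ℕ), ∀ b ∈ l.map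
            (fun v => some (lab G Δ ((explore G Δ x t H.F k).1[k]'hk).1 v.1)),
            b.isSome = true := by
          intro l b hb
          obtain ⟨v, _, rfl⟩ := List.mem_map.1 hb
          rfl
        have hBeq := seg_eq hWpre hWpre' (hBmem _) (hBmem _) hpad
        have hdec : ∀ (F₀ : Finset ((V × ℕ) × (V × ℕ))) (HH : True),
            True := fun _ _ => trivial
        -- decode the two label lists back to vertex lists
        have decAux : ∀ (F₀ : Finset ((V × ℕ) × (V × ℕ)))
            (hprops : ∀ v ∈ inN F₀ ((explore G Δ x t H.F k).1[k]'hk),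
              v.2 = ((explore G Δ x t H.F k).1[k]'hk).2 + 1 ∧
              (v.1 = ((explore G Δ x t H.F k).1[k]'hk).1 ∨
                v.1 ∈ G.neighborFinset ((explore G Δ x t H.F k).1[k]'hk).1)),
            ((sortL (inN F₀ ((explore G Δ x t H.F k).1[k]'hk)
                \ (explore G Δ x t H.F k).1.toFinset)).map
              (fun v => some (lab G Δ ((explore G Δ x t H.F k).1[k]'hk).1 v.1))).map
              (fun s => (unlab G Δ ((explore G Δ x t H.F k).1[k]'hk).1
                  (s.getD ⟨0, by omega⟩),
                ((explore G Δ x t H.F k).1[k]'hk).2 + 1)) =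
            sortL (inN F₀ ((explore G Δ x t H.F k).1[k]'hk)
                \ (explore G Δ x t H.F k).1.toFinset) := by
          intro F₀ hprops
          rw [List.map_map]
          have : ∀ v ∈ sortL (inN F₀ ((explore G Δ x t H.F k).1[k]'hk)
              \ (explore G Δ x t H.F k).1.toFinset),
              ((fun s : Option (Fin (1+Δ)) =>
                  (unlab G Δ ((explore G Δ x t H.F k).1[k]'hk).1
                    (s.getD ⟨0, by omega⟩),
                  ((explore G Δ x t H.F k).1[k]'hk).2 + 1)) ∘
                (fun v => some (lab G Δ ((explore G Δ x t H.F k).1[k]'hk).1 v.1))) v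
                = id v := by
            intro v hv
            have hvin : v ∈ inN F₀ ((explore G Δ x t H.F k).1[k]'hk) :=
              (Finset.mem_sdiff.1 (mem_sortL.1 hv)).1
            obtain ⟨hv2, hv1⟩ := hprops v hvin
            simp only [Function.comp, Option.getD_some, id]
            rw [unlab_lab G Δ (hdeg _) hv1]
            exact Prod.ext rfl hv2.symm
          rw [List.map_congr_left this, List.map_id]
        have d1 := decAux H.F (fun v hv => inN_props G H hv)
        have d2 := decAux H'.F (fun v hv => inN_props G H' hv)
        rw [← d1, ← d2, hBeq]
      rw [hstep, hstep', hout, hil]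

end CodeSec

section InjSec
open Paper

variable (Δ : ℕ) (x : V) (t : ℕ) (n : ℕ) {j : ℕ} {bp : Bool}

lemma bool_eq_of_iff {a b : Bool} (h : a = true ↔ b = true) : a = b := by
  cases a <;> cases b <;> simp_all

lemma tokOf_eq_none_iff (hΔ1 : 0 < Δ) {o : V} {T : ℕ} (H : HistoryGraph G j o T bp)
    (u : V × ℕ) : tokOf G Δ hΔ1 H u = none ↔ u ∈ H.Ustar := by
  rw [tokOf]
  split
  · simp_all
  · simp_all

lemma encode_inj (hn : 1 ≤ n) (hΔ1 : 0 < Δ) (hdeg : ∀ y, G.degree y ≤ Δ)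
    {o : V} {T : ℕ} {o' : V} {T' : ℕ}
    (H : HistoryGraph G j o T bp) (H' : HistoryGraph G j o' T' bp)
    (hU : H.U.card = n) (hx : (x, t) ∈ H.U)
    (hU' : H'.U.card = n) (hx' : (x, t) ∈ H'.U)
    (henc : encode G Δ x t n hn hΔ1 H = encode G Δ x t n hn hΔ1 H') :
    o = o' ∧ T = T' ∧ H.U = H'.U ∧ H.F = H'.F ∧ H.Ustar = H'.Ustar := by
  have h1 := congrArg (fun c : Code n Δ => (c.1 : ℕ)) henc
  have h2 := congrArg (fun c : Code n Δ => c.2.1) henc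
  have h3 := congrArg (fun c : Code n Δ => c.2.2.1) henc
  have h4 := congrArg (fun c : Code n Δ => c.2.2.2) henc
  simp only [encode] at h1 h2 h3 h4
  -- basic facts
  have hfinal := final_explore G Δ x t H hU hx
  have hfinal' := final_explore G Δ x t H' hU' hx'
  have hwb := word_bound G Δ x t H.F n
  have hwb' := word_bound G Δ x t H'.F n
  have hlen := explore_length_le G Δ x t H hU hx n
  have hlen' := explore_length_le G Δ x t H' hU' hx' n
  have hWlen : (explore G Δ x t H.F n).2.length ≤ 2*n - 1 := by omega
  have hWlen' : (explore G Δ x t H'.F n).2.length ≤ 2*n - 1 := by omega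
  -- token equality along the exploration
  have htok : ∀ i : ℕ, i < n →
      tokOf G Δ hΔ1 H ((explore G Δ x t H.F n).1.getD i (x, 0)) =
      tokOf G Δ hΔ1 H' ((explore G Δ x t H'.F n).1.getD i (x, 0)) := by
    intro i hi
    exact congrFun h2 ⟨i, hi⟩
  -- profile equality
  have hprof : ∀ m, ((explore G Δ x t H.F n).2.getD m none).isSome =
      ((explore G Δ x t H'.F n).2.getD m none).isSome := by
    intro m
    rcases Nat.lt_or_ge m (2*n-1) with hm | hm
    · have := Finset.ext_iff.1 h3 ⟨m, hm⟩
      simp only [Finset.mem_filter, Finset.mem_univ, true_and] at this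
      exact bool_eq_of_iff this
    · rw [List.getD_eq_default _ _ (le_trans hWlen hm),
        List.getD_eq_default _ _ (le_trans hWlen' hm)]
  -- reduceOption equality
  have hred : ∀ i, i < n - 1 →
      (explore G Δ x t H.F n).2.reduceOption.getD i ⟨0, by omega⟩ =
      (explore G Δ x t H'.F n).2.reduceOption.getD i ⟨0, by omega⟩ := by
    intro i hi
    exact congrFun h4 ⟨i, hi⟩
  have hpad := optionList_eq (⟨0, by omega⟩ : Fin (1+Δ))
    (explore G Δ x t H.F n).2 (explore G Δ x t H'.F n).2 (n-1)
    (by omega) (by omega) hprof hred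
  -- the explorations coincide
  have hexp := explore_eq G Δ x t n hΔ1 hdeg H H' hU hx hU' hx' htok hpad n le_rfl
  have hM : (explore G Δ x t H.F n).1 = (explore G Δ x t H'.F n).1 :=
    congrArg Prod.fst hexp
  -- U equality
  have hUeq : H.U = H'.U := by rw [← hfinal.2, ← hfinal'.2, hM]
  -- tokens agree on all of U
  have htokU : ∀ u ∈ H.U, tokOf G Δ hΔ1 H u = tokOf G Δ hΔ1 H' u := by
    intro u hu
    have : u ∈ (explore G Δ x t H.F n).1 := by
      rw [← List.mem_toFinset, hfinal.2]; exact hu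
    obtain ⟨i, hilt, hig⟩ := List.mem_iff_getElem.1 this
    have hin : i < n := by omega
    have := htok i hin
    rwa [List.getD_eq_getElem _ _ hilt, hig, ← hM,
      List.getD_eq_getElem _ _ hilt, hig] at this
  -- Ustar equality
  have hUstar : H.Ustar = H'.Ustar := by
    ext u
    constructor
    · intro hu
      have huU : u ∈ H.U := H.ustar_subset hu
      have := (tokOf_eq_none_iff G Δ hΔ1 H u).2 hu
      rw [htokU u huU] at this
      exact (tokOf_eq_none_iff G Δ hΔ1 H' u).1 this
    · intro hu
      have huU : u ∈ H.U := by rw [hUeq]; exact H'.ustar_subset hu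
      have := (tokOf_eq_none_iff G Δ hΔ1 H' u).2 hu
      rw [← htokU u huU] at this
      exact (tokOf_eq_none_iff G Δ hΔ1 H u).1 this
  -- oblique sets agree
  have hoblq : ∀ u ∈ H.U, u ∉ H.Ustar → oblqF G H.F u = oblqF G H'.F u := by
    intro u hu hust
    have h := htokU u hu
    rw [tokOf, tokOf, if_neg hust, if_neg (by rw [← hUstar]; exact hust)] at h
    have h' := Option.some.inj h
    have e1 := decodeSet_encodeSet G Δ hΔ1 (hdeg u.1)
      (S := oblqF G H.F u) (Finset.filter_subset _ _)
    have e2 := decodeSet_encodeSet G Δ hΔ1 (hdeg u.1)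
      (S := oblqF G H'.F u) (Finset.filter_subset _ _)
    rw [← e1, ← e2, h']
  -- F equality
  have hFeq : H.F = H'.F := by
    ext e
    rw [F_eq G H e, F_eq G H' e, hUeq, hUstar]
    constructor
    · rintro ⟨hu, hust, hrest⟩
      refine ⟨hu, hust, ?_⟩
      rcases hrest with h | ⟨ho, h2⟩
      · exact Or.inl h
      · refine Or.inr ⟨?_, h2⟩
        rwa [← hoblq e.1 (by rw [hUeq]; exact hu) (by rw [hUstar]; exact hust)]
    · rintro ⟨hu, hust, hrest⟩
      refine ⟨hu, hust, ?_⟩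
      rcases hrest with h | ⟨ho, h2⟩
      · exact Or.inl h
      · refine Or.inr ⟨?_, h2⟩
        rwa [hoblq e.1 (by rw [hUeq]; exact hu) (by rw [hUstar]; exact hust)]
  -- root equality
  have hroot : (o, T) = ((o' : V), T') := by
    have hoT : (o, T) ∈ (explore G Δ x t H.F n).1 := by
      rw [← List.mem_toFinset, hfinal.2]; exact H.root_mem
    have hoT' : (o', T') ∈ (explore G Δ x t H'.F n).1 := by
      rw [← List.mem_toFinset, hfinal'.2]; exact H'.root_mem
    have hidx : myIdx (explore G Δ x t H.F n).1 (o, T) <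
        (explore G Δ x t H.F n).1.length := myIdx_lt hoT
    have hidx' : myIdx (explore G Δ x t H'.F n).1 (o', T') <
        (explore G Δ x t H'.F n).1.length := myIdx_lt hoT'
    have hb1 : myIdx (explore G Δ x t H.F n).1 (o, T) < 1 + 2*n := by omega
    have hb2 : myIdx (explore G Δ x t H'.F n).1 (o', T') < 1 + 2*n := by omega
    simp only [Nat.mod_eq_of_lt hb1, Nat.mod_eq_of_lt hb2] at h1
    have f1 : (explore G Δ x t H.F n).1.getD
        (myIdx (explore G Δ x t H.F n).1 (o, T)) (x, 0) = (o, T) := by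
      rw [List.getD_eq_getElem _ _ hidx]; exact getElem_myIdx hidx
    have f2 : (explore G Δ x t H'.F n).1.getD
        (myIdx (explore G Δ x t H'.F n).1 (o', T')) (x, 0) = (o', T') := by
      rw [List.getD_eq_getElem _ _ hidx']; exact getElem_myIdx hidx'
    rw [← f1, h1, hM]
    exact f2
  rw [Prod.mk.injEq] at hroot
  exact ⟨hroot.1, hroot.2, hUeq, hFeq, hUstar⟩

end InjSec

abbrev Code' (n Δ : ℕ) :=
  Fin (1 + 2*n) × (Fin n → Option (Finset (Fin Δ))) × Finset (Fin (2*n-1)) ×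
    (Fin (n-1) → Fin (1+Δ))

section ExtSec
open Paper

lemma hist_ext {j : ℕ} {o : V} {T : ℕ} {bp : Bool}
    (H H' : HistoryGraph G j o T bp)
    (h1 : H.U = H'.U) (h2 : H.F = H'.F) (h3 : H.Ustar = H'.Ustar) : H = H' := by
  cases H; cases H'
  simp only at h1 h2 h3
  subst h1; subst h2; subst h3
  rfl

end ExtSec

end Aux8


open Paper in
/-- the number of history graphs (for either process, selected by `bp`, over all
possible roots `(o, T)`) whose vertex set has cardinality `n` and contains a fixed `(x, t)` is
at most `(1 + 2n) · (1 + Δ)^n · 4^n · (1 + 2^Δ)^n`. -/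
theorem historyGraph_count_containing_vertex
    {V : Type*} [Infinite V]
    (G : SimpleGraph V) [DecidableRel G.Adj] [∀ v, Fintype (G.neighborSet v)]
    (hconn : G.Connected)
    (Δ : ℕ) (hΔ : IsLUB (Set.range fun x => G.degree x) Δ)
    (δ : ℕ) (hδ : IsGLB (Set.range fun x => G.degree x) δ)
    (j : ℕ) (hj1 : 1 ≤ j) (hjδ : j ≤ δ)
    (x : V) (t : ℕ) (bp : Bool) (n : ℕ) (hn : 1 ≤ n) :
    {H : (oT : V × ℕ) × HistoryGraph G j oT.1 oT.2 bp |
        H.2.U.card = n ∧ (x, t) ∈ H.2.U}.Finite ∧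
      {H : (oT : V × ℕ) × HistoryGraph G j oT.1 oT.2 bp |
        H.2.U.card = n ∧ (x, t) ∈ H.2.U}.ncard ≤
        (1 + 2 * n) * (1 + Δ) ^ n * 4 ^ n * (1 + 2 ^ Δ) ^ n := by
  have hdeg : ∀ y, G.degree y ≤ Δ := fun y => hΔ.1 ⟨y, rfl⟩
  have hΔ1 : 0 < Δ := by
    obtain ⟨v, w, hvw⟩ := exists_pair_ne V
    obtain ⟨p⟩ := hconn.preconnected v w
    cases p with
    | nil => exact absurd rfl hvw
    | cons h _ =>
        exact lt_of_lt_of_le ((G.degree_pos_iff_exists_adj v).2 ⟨_, h⟩) (hdeg v)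
  set S := {H : (oT : V × ℕ) × HistoryGraph G j oT.1 oT.2 bp |
      H.2.U.card = n ∧ (x, t) ∈ H.2.U} with hSdef
  let f : S → Aux8.Code n Δ := fun a => Aux8.encode G Δ x t n hn hΔ1 a.1.2
  have hf : Function.Injective f := by
    rintro ⟨⟨⟨o, T⟩, H⟩, hH⟩ ⟨⟨⟨o', T'⟩, H'⟩, hH'⟩ heq
    obtain ⟨ho, hT, hU, hF, hS'⟩ := Aux8.encode_inj G Δ x t n hn hΔ1 hdeg H H'
      hH.1 hH.2 hH'.1 hH'.2 heq
    subst ho; subst hT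
    have : H = H' := Aux8.hist_ext G H H' hU hF hS'
    subst this
    rfl
  haveI : Finite S := Finite.of_injective f hf
  have hfin : S.Finite := Set.toFinite S
  refine ⟨hfin, ?_⟩
  have hcard : S.ncard ≤ Fintype.card (Aux8.Code n Δ) := by
    rw [← Nat.card_coe_set_eq, ← Nat.card_eq_fintype_card]
    exact Nat.card_le_card_of_injective f hf
  refine le_trans hcard ?_
  rw [Aux8.card_Code]
  have b2 : (2:ℕ) ^ (2*n-1) ≤ 4 ^ n := by
    rw [show (4:ℕ) = 2^2 by norm_num, ← pow_mul]
    exact Nat.pow_le_pow_right (by norm_num) (by omega)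
  have b3 : (Δ+1:ℕ) ^ (n-1) ≤ (1+Δ) ^ n := by
    rw [show Δ + 1 = 1 + Δ by omega]
    exact Nat.pow_le_pow_right (by omega) (by omega)
  calc (1 + 2*n) * (2 ^ Δ + 1) ^ n * 2 ^ (2*n-1) * (Δ + 1) ^ (n-1)
      ≤ (1 + 2*n) * (2 ^ Δ + 1) ^ n * 4 ^ n * (1 + Δ) ^ n :=
        Nat.mul_le_mul (Nat.mul_le_mul le_rfl b2) b3
    _ = (1 + 2 * n) * (1 + Δ) ^ n * 4 ^ n * (1 + 2 ^ Δ) ^ n := by ring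
end
end

section
/- Let ℋ = (𝒰, ℱ, 𝒰*) be a history graph for (o,T) for the j-threshold Consensus Process, and for s ∈ ℕ write U_s := {x ∈ V : (x,s) ∈ 𝒰} and Ū_s := {x ∈ V : (x,s) ∈ 𝒰 \ 𝒰*}. Then for every t with 2 ≤ t ≤ T, as an inequality of real numbers, 2·(Φ_E(G) − j + 1)·|Ū_t| ≤ (Δ − Φ_E(G))·|U_{t−1} \ Ū_t|. -/
open Classical
noncomputable section

section SliceHelpers

open Paper

variable {V : Type*} [DecidableEq V] (G : SimpleGraph V) [DecidableRel G.Adj]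
    [∀ v, Fintype (G.neighborSet v)]

/-- Number of neighbours of `x` inside `S`. -/
def nbIn (S : Finset V) (x : V) : ℕ :=
  ((G.neighborFinset x).filter fun y => y ∈ S).card

lemma nbIn_le_degree (S : Finset V) (x : V) : nbIn G S x ≤ G.degree x :=
  le_trans (Finset.card_filter_le _ _) (le_of_eq (G.card_neighborFinset_eq_degree x))

lemma nbIn_mono {S T : Finset V} (h : S ⊆ T) (x : V) : nbIn G S x ≤ nbIn G T x := by
  apply Finset.card_le_card
  intro y hy
  simp only [Finset.mem_filter] at hy ⊢
  exact ⟨hy.1, h hy.2⟩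

lemma nbIn_union_disjoint {S T : Finset V} (h : Disjoint S T) (x : V) :
    nbIn G (S ∪ T) x = nbIn G S x + nbIn G T x := by
  classical
  unfold nbIn
  simp only [Finset.mem_union]
  rw [Finset.filter_or, Finset.card_union_of_disjoint]
  exact Finset.disjoint_left.mpr fun a ha ha' => by
    simp only [Finset.mem_filter] at ha ha'
    exact (Finset.disjoint_left.mp h ha.2) ha'.2

lemma nbIn_eq_filter (S : Finset V) (x : V) :
    nbIn G S x = (S.filter fun y => G.Adj x y).card := by
  classical
  unfold nbIn
  congr 1
  ext y
  simp only [Finset.mem_filter, SimpleGraph.mem_neighborFinset]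
  exact and_comm

lemma nbIn_sum_comm (A C : Finset V) :
    ∑ x ∈ A, nbIn G C x = ∑ y ∈ C, nbIn G A y := by
  classical
  simp only [nbIn_eq_filter, Finset.card_filter]
  rw [Finset.sum_comm]
  exact Finset.sum_congr rfl fun y _ => Finset.sum_congr rfl fun x _ =>
    if_congr (G.adj_comm x y) rfl rfl

lemma edgeExpansion_bddBelow :
    BddBelow {r : ℝ | ∃ K : Finset V, K.Nonempty ∧
      r = (edgeBoundaryCard G K : ℝ) / (K.card : ℝ)} :=
  ⟨0, by rintro r ⟨K, hK, rfl⟩; positivity⟩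

lemma edgeExpansion_mul_card_le {K : Finset V} (hK : K.Nonempty) :
    edgeExpansion G * (K.card : ℝ) ≤ (edgeBoundaryCard G K : ℝ) := by
  have h : edgeExpansion G ≤ (edgeBoundaryCard G K : ℝ) / (K.card : ℝ) :=
    csInf_le (edgeExpansion_bddBelow G) ⟨K, hK, rfl⟩
  have hpos : (0 : ℝ) < (K.card : ℝ) := by exact_mod_cast hK.card_pos
  exact (le_div_iff₀ hpos).mp h

lemma edgeBoundaryCard_singleton (x : V) : edgeBoundaryCard G {x} = G.degree x := by
  classical
  unfold edgeBoundaryCard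
  rw [Finset.sum_singleton, Finset.filter_congr_decidable, ← G.card_neighborFinset_eq_degree]
  congr 1
  apply Finset.filter_true_of_mem
  intro y hy
  simp only [Finset.mem_singleton]
  intro h
  exact G.loopless.irrefl x (h ▸ (G.mem_neighborFinset x y).mp hy)

lemma edgeExpansion_le_degree (x : V) : edgeExpansion G ≤ (G.degree x : ℝ) :=
  csInf_le (edgeExpansion_bddBelow G)
    ⟨{x}, ⟨x, Finset.mem_singleton_self x⟩, by
      simp [edgeBoundaryCard_singleton]⟩

lemma edgeBoundaryCard_eq_sum (K : Finset V) :
    (edgeBoundaryCard G K : ℝ) = ∑ x ∈ K, ((G.degree x : ℝ) - (nbIn G K x : ℝ)) := by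
  classical
  unfold edgeBoundaryCard
  push_cast
  refine Finset.sum_congr rfl fun x _ => ?_
  rw [Finset.filter_congr_decidable]
  rw [eq_sub_iff_add_eq, ← Nat.cast_add, Nat.cast_inj, add_comm,
    show nbIn G K x = ((G.neighborFinset x).filter fun y => y ∈ K).card from rfl,
    ← G.card_neighborFinset_eq_degree]
  exact Finset.card_filter_add_card_filter_not _

end SliceHelpers

open Paper in
/-- the single-time-slice inequality (4.6) for a history graph for the
`j`-threshold Consensus Process:
`2(Φ_E − j + 1)|Ū_t| ≤ (Δ − Φ_E)|U_{t−1} \ Ū_t|` for all `2 ≤ t ≤ T`. -/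
theorem historyGraph_slice_inequality_CP
    {V : Type*} [Infinite V] [DecidableEq V]
    (G : SimpleGraph V) [DecidableRel G.Adj] [∀ v, Fintype (G.neighborSet v)]
    (hconn : G.Connected)
    (Δ : ℕ) (hΔ : IsLUB (Set.range fun x => G.degree x) Δ)
    (δ : ℕ) (hδ : IsGLB (Set.range fun x => G.degree x) δ)
    (j : ℕ) (hj1 : 1 ≤ j) (hjδ : j ≤ δ)
    (o : V) (T : ℕ) (H : HistoryGraph G j o T false)
    (t : ℕ) (ht2 : 2 ≤ t) (htT : t ≤ T) :
    2 * (edgeExpansion G - j + 1) *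
        (((H.U \ H.Ustar).filter fun u => u.2 = t).image Prod.fst).card ≤
      (Δ - edgeExpansion G) *
        (((H.U.filter fun u => u.2 = t - 1).image Prod.fst \
          ((H.U \ H.Ustar).filter fun u => u.2 = t).image Prod.fst).card) := by
  classical
  set Φ := edgeExpansion G with hPhi
  set A := ((H.U \ H.Ustar).filter fun u => u.2 = t).image Prod.fst with hAdef
  set B := (H.U.filter fun u => u.2 = t - 1).image Prod.fst with hBdef
  set C := B \ A with hCdef
  have hdegΔ : ∀ x : V, (G.degree x : ℝ) ≤ (Δ : ℝ) := fun x => by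
    exact_mod_cast hΔ.1 ⟨x, rfl⟩
  have hΦΔ : Φ ≤ (Δ : ℝ) :=
    le_trans (edgeExpansion_le_degree G (Classical.arbitrary V)) (hdegΔ _)
  have hdegj : ∀ x : V, j ≤ G.degree x := fun x => le_trans hjδ (hδ.1 ⟨x, rfl⟩)
  -- every x ∈ A has at least deg x + 1 - j neighbours in B
  have hKey : ∀ x ∈ A, (G.degree x : ℝ) + 1 - (j : ℝ) ≤ (nbIn G B x : ℝ) := by
    intro x hx
    obtain ⟨p, hp, hpx⟩ := Finset.mem_image.mp hx
    rw [Finset.mem_filter] at hp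
    have hpeq : p = (x, t) := Prod.ext hpx hp.2
    rw [hpeq] at hp
    have hmem := Finset.mem_sdiff.mp hp.1
    have hcard := H.oblique_count (x, t) hmem.1 hmem.2
    rw [Finset.filter_congr_decidable] at hcard
    have hinj0 : G.degree (x, t).1 + 1 - j ≤ nbIn G B x := by
      rw [← hcard]
      apply Finset.card_le_card_of_injOn (fun e => e.2.1)
      · intro e he
        rw [Finset.mem_coe, Finset.mem_filter] at he
        obtain ⟨heF, he1, hne⟩ := he
        have ht' := H.edge_time e heF
        have hsp := H.edge_space e heF
        rw [he1] at ht' hsp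
        simp only at ht' hsp hne
        have hadj : G.Adj x e.2.1 := hsp.resolve_left fun h => hne h.symm
        refine Finset.mem_filter.mpr ⟨(G.mem_neighborFinset x e.2.1).mpr hadj, ?_⟩
        refine Finset.mem_image.mpr ⟨e.2, Finset.mem_filter.mpr ⟨H.edge_mem_snd e heF, ?_⟩, rfl⟩
        omega
      · intro e he e' he' hfe
        simp only [Finset.coe_filter, Set.mem_setOf_eq] at he he'
        have h1 : e.1 = e'.1 := he.2.1.trans he'.2.1.symm
        have te := H.edge_time e he.1
        have te' := H.edge_time e' he'.1
        rw [he.2.1] at te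
        rw [he'.2.1] at te'
        have h2 : e.2 = e'.2 := Prod.ext hfe (by omega)
        exact Prod.ext h1 h2
    have hinj : G.degree x + 1 - j ≤ nbIn G B x := hinj0
    have hj' : j ≤ G.degree x + 1 := by have := hdegj x; omega
    have hcast := (Nat.cast_le (α := ℝ)).mpr hinj
    rw [Nat.cast_sub hj'] at hcast
    push_cast at hcast
    linarith
  rcases A.eq_empty_or_nonempty with hAe | hAne
  · rw [hCdef, hAe]
    simp only [Finset.card_empty, Nat.cast_zero, mul_zero, Finset.sdiff_empty]
    exact mul_nonneg (by linarith) (by positivity)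
  · set K := A ∪ C with hKdef
    have hACdisj : Disjoint A C := Finset.disjoint_sdiff
    have hAK : A ⊆ K := Finset.subset_union_left
    have hCK : C ⊆ K := Finset.subset_union_right
    have hBK : B ⊆ K := by
      intro b hb
      by_cases hbA : b ∈ A
      · exact hAK hbA
      · exact hCK (Finset.mem_sdiff.mpr ⟨hb, hbA⟩)
    have hKne : K.Nonempty := hAne.mono hAK
    have hKcard : (K.card : ℝ) = (A.card : ℝ) + (C.card : ℝ) := by
      rw [hKdef, Finset.card_union_of_disjoint hACdisj]; push_cast; ring
    have hsplit : ∀ x : V, (nbIn G K x : ℝ) = (nbIn G A x : ℝ) + (nbIn G C x : ℝ) := by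
      intro x
      rw [hKdef]
      exact_mod_cast nbIn_union_disjoint G hACdisj x
    -- each x ∈ A has at most j - 1 neighbours outside K
    have hxA : ∀ x ∈ A, (G.degree x : ℝ) - (nbIn G K x : ℝ) ≤ (j : ℝ) - 1 := by
      intro x hx
      have h1 := hKey x hx
      have h2 : (nbIn G B x : ℝ) ≤ (nbIn G K x : ℝ) := by
        exact_mod_cast nbIn_mono G hBK x
      linarith
    -- expansion applied to A
    have e1 : Φ * (A.card : ℝ) ≤ (edgeBoundaryCard G A : ℝ) :=
      edgeExpansion_mul_card_le G hAne
    have hdA : (edgeBoundaryCard G A : ℝ) ≤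
        (∑ x ∈ A, (nbIn G C x : ℝ)) + ((j : ℝ) - 1) * (A.card : ℝ) := by
      rw [edgeBoundaryCard_eq_sum]
      have hterm : ∀ x ∈ A, (G.degree x : ℝ) - (nbIn G A x : ℝ) ≤
          (nbIn G C x : ℝ) + ((j : ℝ) - 1) := by
        intro x hx
        have h1 := hxA x hx
        have h2 := hsplit x
        linarith
      calc ∑ x ∈ A, ((G.degree x : ℝ) - (nbIn G A x : ℝ))
          ≤ ∑ x ∈ A, ((nbIn G C x : ℝ) + ((j : ℝ) - 1)) := Finset.sum_le_sum hterm
        _ = (∑ x ∈ A, (nbIn G C x : ℝ)) + ((j : ℝ) - 1) * (A.card : ℝ) := by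
            rw [Finset.sum_add_distrib, Finset.sum_const, nsmul_eq_mul]; ring
    -- expansion applied to K
    have e2 : Φ * (K.card : ℝ) ≤ (edgeBoundaryCard G K : ℝ) :=
      edgeExpansion_mul_card_le G hKne
    have hdK : (edgeBoundaryCard G K : ℝ) ≤
        ((j : ℝ) - 1) * (A.card : ℝ) + (Δ : ℝ) * (C.card : ℝ)
          - ∑ y ∈ C, (nbIn G K y : ℝ) := by
      rw [edgeBoundaryCard_eq_sum]
      rw [hKdef, Finset.sum_union hACdisj, ← hKdef]
      have hA' : ∑ x ∈ A, ((G.degree x : ℝ) - (nbIn G K x : ℝ)) ≤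
          ((j : ℝ) - 1) * (A.card : ℝ) := by
        calc ∑ x ∈ A, ((G.degree x : ℝ) - (nbIn G K x : ℝ))
            ≤ ∑ _x ∈ A, ((j : ℝ) - 1) := Finset.sum_le_sum hxA
          _ = ((j : ℝ) - 1) * (A.card : ℝ) := by
              rw [Finset.sum_const, nsmul_eq_mul]; ring
      have hC' : ∑ y ∈ C, ((G.degree y : ℝ) - (nbIn G K y : ℝ)) ≤
          (Δ : ℝ) * (C.card : ℝ) - ∑ y ∈ C, (nbIn G K y : ℝ) := by
        have : ∑ y ∈ C, ((G.degree y : ℝ) - (nbIn G K y : ℝ)) ≤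
            ∑ y ∈ C, ((Δ : ℝ) - (nbIn G K y : ℝ)) :=
          Finset.sum_le_sum fun y _ => by have := hdegΔ y; linarith
        calc ∑ y ∈ C, ((G.degree y : ℝ) - (nbIn G K y : ℝ))
            ≤ ∑ y ∈ C, ((Δ : ℝ) - (nbIn G K y : ℝ)) := this
          _ = (Δ : ℝ) * (C.card : ℝ) - ∑ y ∈ C, (nbIn G K y : ℝ) := by
              rw [Finset.sum_sub_distrib, Finset.sum_const, nsmul_eq_mul]; ring
      linarith
    -- double counting of edges between A and C
    have hS23 : (∑ x ∈ A, (nbIn G C x : ℝ)) ≤ ∑ y ∈ C, (nbIn G K y : ℝ) := by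
      have h1 : ∑ x ∈ A, nbIn G C x = ∑ y ∈ C, nbIn G A y := nbIn_sum_comm G A C
      have h2 : ∑ y ∈ C, nbIn G A y ≤ ∑ y ∈ C, nbIn G K y :=
        Finset.sum_le_sum fun y _ => nbIn_mono G hAK y
      exact_mod_cast h1 ▸ h2
    nlinarith [e1, hdA, e2, hdK, hS23, hKcard]
end
end
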